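/- arXiv:1308.4462 — 3 statements merged into one kernel-verified Lean document; each statement's English description precedes it below -/
import Mathlib

section
/- Assume (B2). The limits η^ω(A) = lim_{n→∞} Φ_n^{z^{-n}ω}(σ)(A) and h(ω,x) = lim_{n→∞} Q_n^ω(1)(x)/Φ_n^{z^{-n}ω}(σ)(Q_n^ω(1)) do not depend on the choice of the probability measure σ, and there exist constants C < ∞ and ρ < 1 such that for every n ≥ 1 and every bounded measurable φ : E → ℝ: sup_{ω∈Ω} sup_{σ∈𝒫(E)} | Φ_n^{z^{-n}ω}(σ)(φ) − η^ω(φ) | ≤ C·ρ^n·sup_{x∈E}|φ(x)|, and sup_{ω∈Ω} sup_{x∈E} sup_{σ∈𝒫(E)} | Q_n^ω(1)(x)/Φ_n^{z^{-n}ω}(σ)(Q_n^ω(1)) − h(ω,x) | ≤ C·ρ^n. -/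
open MeasureTheory ENNReal Filter Topology

noncomputable section

/-- The environment space `Ω = H^ℤ`. -/
abbrev Env (H : Type*) := ℤ → H

/-- The shift operator `z`: `(zω)(n) = ω(n+1)`. -/
def shift {H : Type*} (ω : Env H) : Env H := fun n => ω (n + 1)

/-- The inverse shift `z⁻¹`: `(z⁻¹ω)(n) = ω(n-1)`. -/
def shiftInv {H : Type*} (ω : Env H) : Env H := fun n => ω (n - 1)

/-- Iterates `z^{-k}` of the inverse shift. -/
def zitInv {H : Type*} : ℕ → Env H → Env H
  | 0, ω => ω
  | n + 1, ω => shiftInv (zitInv n ω)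

variable {H E : Type*} [MeasurableSpace H] [MeasurableSpace E]

/-- Iterates `z^k` of the shift. -/
def zit {H : Type*} : ℕ → Env H → Env H
  | 0, ω => ω
  | n + 1, ω => shift (zit n ω)

/-- The sub-Markov kernel `Q^ω(x,dx') = W(ω,x) M^ω(x,dx')`. -/
def Qk (M : Env H → E → Measure E) (W : Env H → E → ℝ) (ω : Env H) (x : E) :
    Measure E := ENNReal.ofReal (W ω x) • M ω x

/-- The compositions `Q_n^ω = Q^ω Q^{zω} ⋯ Q^{z^{n-1}ω}` (with `Q_0` the identity). -/
def Qn (M : Env H → E → Measure E) (W : Env H → E → ℝ) :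
    ℕ → Env H → E → Measure E
  | 0, _, x => Measure.dirac x
  | n + 1, ω, x => (Qn M W n ω x).bind (Qk M W (zit n ω))

/-- The total mass `σ Q_n^ω(1)`. -/
def QnMass (M : Env H → E → Measure E) (W : Env H → E → ℝ)
    (n : ℕ) (ω : Env H) (σ : Measure E) : ℝ≥0∞ :=
  (σ.bind (Qn M W n ω)) Set.univ

/-- `Φ_n^ω(σ)(A) = σQ_n^ω(A) / σQ_n^ω(1)`. -/
def PhiSet (M : Env H → E → Measure E) (W : Env H → E → ℝ)
    (n : ℕ) (ω : Env H) (σ : Measure E) (A : Set E) : ℝ≥0∞ :=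
  (σ.bind (Qn M W n ω)) A / QnMass M W n ω σ

/-- `Φ_n^ω(σ)(φ)` for a `ℝ≥0∞`-valued function `φ`. -/
def PhiFun (M : Env H → E → Measure E) (W : Env H → E → ℝ)
    (n : ℕ) (ω : Env H) (σ : Measure E) (φ : E → ℝ≥0∞) : ℝ≥0∞ :=
  (∫⁻ y, φ y ∂(σ.bind (Qn M W n ω))) / QnMass M W n ω σ

/-- The ratio `Q_n^ω(1)(x) / Φ_n^{z^{-n}ω}(σ)(Q_n^ω(1))` whose limit defines `h(ω,x)`. -/
def ratioH (M : Env H → E → Measure E) (W : Env H → E → ℝ) (σ : Measure E)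
    (n : ℕ) (ω : Env H) (x : E) : ℝ≥0∞ :=
  (Qn M W n ω x) Set.univ /
    PhiFun M W n (zitInv n ω) σ (fun y => (Qn M W n ω y) Set.univ)

/-- `Φ_n^ω(σ)` as a probability measure: `σQ_n^ω` normalised by its total mass. -/
def PhiMeas (M : Env H → E → Measure E) (W : Env H → E → ℝ)
    (n : ℕ) (ω : Env H) (σ : Measure E) : Measure E :=
  (QnMass M W n ω σ)⁻¹ • σ.bind (Qn M W n ω)

/-! ### Auxiliary lemmas -/

section Aux
set_option linter.unusedSectionVars false

variable {H E : Type*} [MeasurableSpace H] [MeasurableSpace E]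
variable {M : Env H → E → Measure E} {W : Env H → E → ℝ}

lemma shift_shiftInv (ω : Env H) : shift (shiftInv ω) = ω := by
  funext n; simp [shift, shiftInv]

@[simp] lemma zit_zero (θ : Env H) : zit 0 θ = θ := rfl

lemma zit_one (θ : Env H) : zit 1 θ = shift θ := rfl

lemma zit_add (b a : ℕ) (θ : Env H) : zit b (zit a θ) = zit (a + b) θ := by
  induction b with
  | zero => rfl
  | succ b ih => show shift (zit b (zit a θ)) = zit (a + (b+1)) θ
                 rw [ih]; rfl

lemma zit_shift (a : ℕ) (θ : Env H) : zit a (shift θ) = zit (a + 1) θ := by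
  rw [← zit_one, zit_add, Nat.add_comm]

lemma zit_zitInv (a b : ℕ) (ω : Env H) : zit a (zitInv (a + b) ω) = zitInv b ω := by
  induction a generalizing b with
  | zero => rw [Nat.zero_add]; rfl
  | succ a ih =>
      have h1 : a + 1 + b = a + (b + 1) := by omega
      have : zit a (zitInv (a + (b+1)) ω) = zitInv (b+1) ω := ih (b+1)
      show zit (a + 1) (zitInv (a + 1 + b) ω) = zitInv b ω
      rw [h1, ← zit_add, this]
      show shift (shiftInv (zitInv b ω)) = zitInv b ω
      exact shift_shiftInv _

lemma measurable_M_slice (hMmeas : Measurable fun p : Env H × E => M p.1 p.2) (θ : Env H) :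
    Measurable (M θ) :=
  hMmeas.comp (measurable_const.prodMk measurable_id)

lemma measurable_W_slice (hWmeas : Measurable fun p : Env H × E => W p.1 p.2) (θ : Env H) :
    Measurable fun x => ENNReal.ofReal (W θ x) :=
  ENNReal.measurable_ofReal.comp (hWmeas.comp (measurable_const.prodMk measurable_id))

lemma measurable_Qk (hMmeas : Measurable fun p : Env H × E => M p.1 p.2)
    (hWmeas : Measurable fun p : Env H × E => W p.1 p.2) (θ : Env H) :
    Measurable (Qk M W θ) := by
  apply Measure.measurable_of_measurable_coe
  intro s hs
  simp only [Qk, Measure.smul_apply, smul_eq_mul]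
  exact (measurable_W_slice hWmeas θ).mul
    ((Measure.measurable_coe hs).comp (measurable_M_slice hMmeas θ))

lemma measurable_Qn (hMmeas : Measurable fun p : Env H × E => M p.1 p.2)
    (hWmeas : Measurable fun p : Env H × E => W p.1 p.2) (n : ℕ) (θ : Env H) :
    Measurable (Qn M W n θ) := by
  induction n with
  | zero => exact Measure.measurable_dirac
  | succ n ih =>
      exact (Measure.measurable_bind' (measurable_Qk hMmeas hWmeas (zit n θ))).comp ih

lemma measurable_Qn_lintegral (hMmeas : Measurable fun p : Env H × E => M p.1 p.2)
    (hWmeas : Measurable fun p : Env H × E => W p.1 p.2) (n : ℕ) (θ : Env H)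
    {φ : E → ℝ≥0∞} (hφ : Measurable φ) :
    Measurable fun y => ∫⁻ z, φ z ∂(Qn M W n θ y) :=
  (Measure.measurable_lintegral hφ).comp (measurable_Qn hMmeas hWmeas n θ)

lemma measurable_Qn_set (hMmeas : Measurable fun p : Env H × E => M p.1 p.2)
    (hWmeas : Measurable fun p : Env H × E => W p.1 p.2) (n : ℕ) (θ : Env H)
    {A : Set E} (hA : MeasurableSet A) :
    Measurable fun y => Qn M W n θ y A :=
  (Measure.measurable_coe hA).comp (measurable_Qn hMmeas hWmeas n θ)

lemma Qn_zero_eq (θ : Env H) : Qn M W 0 θ = Measure.dirac := rfl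

lemma Qn_add (hMmeas : Measurable fun p : Env H × E => M p.1 p.2)
    (hWmeas : Measurable fun p : Env H × E => W p.1 p.2) (b a : ℕ) (θ : Env H) (x : E) :
    Qn M W (a + b) θ x = (Qn M W a θ x).bind (Qn M W b (zit a θ)) := by
  induction b with
  | zero => simp [Qn_zero_eq, Measure.bind_dirac]
  | succ b ih =>
      show (Qn M W (a+b) θ x).bind (Qk M W (zit (a+b) θ)) = _
      rw [ih, Measure.bind_bind (measurable_Qn hMmeas hWmeas b (zit a θ)).aemeasurable
        (measurable_Qk hMmeas hWmeas _).aemeasurable]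
      have : ∀ y : E, (Qn M W b (zit a θ) y).bind (Qk M W (zit (a + b) θ))
          = Qn M W (b+1) (zit a θ) y := by
        intro y
        show _ = (Qn M W b (zit a θ) y).bind (Qk M W (zit b (zit a θ)))
        rw [zit_add]
      simp_rw [this]

lemma Qn_one (hMmeas : Measurable fun p : Env H × E => M p.1 p.2)
    (hWmeas : Measurable fun p : Env H × E => W p.1 p.2) (θ : Env H) (x : E) :
    Qn M W 1 θ x = Qk M W θ x := by
  show (Measure.dirac x).bind (Qk M W (zit 0 θ)) = _
  rw [Measure.dirac_bind (measurable_Qk hMmeas hWmeas _)]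
  rfl

lemma Qn_succ_front (hMmeas : Measurable fun p : Env H × E => M p.1 p.2)
    (hWmeas : Measurable fun p : Env H × E => W p.1 p.2) (n : ℕ) (θ : Env H) (x : E) :
    Qn M W (n + 1) θ x = (Qk M W θ x).bind (Qn M W n (shift θ)) := by
  have := Qn_add (M := M) (W := W) hMmeas hWmeas n 1 θ x
  rw [Nat.add_comm 1 n] at this
  rw [this, Qn_one hMmeas hWmeas, zit_one]

lemma lintegral_Qk (θ : Env H) (x : E) (φ : E → ℝ≥0∞) :
    ∫⁻ y, φ y ∂(Qk M W θ x) = ENNReal.ofReal (W θ x) * ∫⁻ y, φ y ∂(M θ x) := by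
  simp [Qk, lintegral_smul_measure]

lemma Qk_univ (hMprob : ∀ ω x, IsProbabilityMeasure (M ω x)) (θ : Env H) (x : E) :
    Qk M W θ x Set.univ = ENNReal.ofReal (W θ x) := by
  simp [Qk, Measure.smul_apply, (hMprob θ x).measure_univ]

variable (hMprob : ∀ ω x, IsProbabilityMeasure (M ω x))
variable (hMmeas : Measurable fun p : Env H × E => M p.1 p.2)
variable (hWmeas : Measurable fun p : Env H × E => W p.1 p.2)
variable {εm εp : ℝ} (hεm : 0 < εm) (hεmp : εm ≤ εp)
variable {ν : Measure E} [IsProbabilityMeasure ν]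
variable (hB2b : ∀ ω x, ∀ A : Set E, MeasurableSet A →
    ENNReal.ofReal εm * ν A ≤ M ω x A ∧ M ω x A ≤ ENNReal.ofReal εp * ν A)

include hB2b in
lemma lintegral_M_ge (θ : Env H) (x : E) (f : E → ℝ≥0∞) :
    ENNReal.ofReal εm * ∫⁻ y, f y ∂ν ≤ ∫⁻ y, f y ∂(M θ x) := by
  have hle : (ENNReal.ofReal εm) • ν ≤ M θ x :=
    Measure.le_iff.2 fun s hs => by
      simpa [Measure.smul_apply, smul_eq_mul] using (hB2b θ x s hs).1
  calc ENNReal.ofReal εm * ∫⁻ y, f y ∂ν = ∫⁻ y, f y ∂((ENNReal.ofReal εm) • ν) :=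
        by rw [lintegral_smul_measure, smul_eq_mul]
  _ ≤ _ := lintegral_mono' hle le_rfl

include hB2b in
lemma lintegral_M_le (θ : Env H) (x : E) (f : E → ℝ≥0∞) :
    ∫⁻ y, f y ∂(M θ x) ≤ ENNReal.ofReal εp * ∫⁻ y, f y ∂ν := by
  have hle : M θ x ≤ (ENNReal.ofReal εp) • ν :=
    Measure.le_iff.2 fun s hs => by
      simpa [Measure.smul_apply, smul_eq_mul] using (hB2b θ x s hs).2
  calc ∫⁻ y, f y ∂(M θ x) ≤ ∫⁻ y, f y ∂((ENNReal.ofReal εp) • ν) := lintegral_mono' hle le_rfl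
  _ = _ := lintegral_smul_measure _ _

-- The core contraction induction ("Dobrushin" sandwich for the weighted chain).
include hMmeas hWmeas hεm hεmp hB2b in
lemma lemB :
    ∀ (k : ℕ) (θ : Env H) (φ ψ : E → ℝ≥0∞) (c : ℝ≥0∞), Measurable φ → Measurable ψ →
    c ≠ ∞ → (∀ y, φ y ≤ c * ψ y) →
    (∀ j, j < k → 0 < ∫⁻ y, (∫⁻ z, ψ z ∂(Qn M W j (zit (k - j) θ) y)) ∂ν ∧
        ∫⁻ y, (∫⁻ z, ψ z ∂(Qn M W j (zit (k - j) θ) y)) ∂ν ≠ ∞) →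
    ∃ s : ℝ≥0∞, s + (ENNReal.ofReal (1 - εm / εp)) ^ k * c ≤ c ∧
      ∀ x, s * ∫⁻ z, ψ z ∂(Qn M W k θ x) ≤ ∫⁻ z, φ z ∂(Qn M W k θ x) ∧
        ∫⁻ z, φ z ∂(Qn M W k θ x)
          ≤ (s + (ENNReal.ofReal (1 - εm / εp)) ^ k * c) * ∫⁻ z, ψ z ∂(Qn M W k θ x) := by
  have hεp : (0:ℝ) < εp := lt_of_lt_of_le hεm hεmp
  have hβρ : ENNReal.ofReal (εm / εp) + ENNReal.ofReal (1 - εm / εp) = 1 := by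
    rw [← ENNReal.ofReal_add (by positivity) (by
      have : εm / εp ≤ 1 := (div_le_one hεp).2 hεmp
      linarith)]
    norm_num
  have hβεp : ENNReal.ofReal (εm / εp) * ENNReal.ofReal εp = ENNReal.ofReal εm := by
    rw [← ENNReal.ofReal_mul (by positivity)]
    congr 1
    field_simp
  intro k
  induction k with
  | zero =>
      intro θ φ ψ c hφ hψ hc hφψ _
      refine ⟨0, by simp, fun x => ?_⟩
      show 0 * ∫⁻ z, ψ z ∂(Measure.dirac x) ≤ ∫⁻ z, φ z ∂(Measure.dirac x) ∧
        ∫⁻ z, φ z ∂(Measure.dirac x) ≤ _ * ∫⁻ z, ψ z ∂(Measure.dirac x)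
      rw [lintegral_dirac' _ hφ, lintegral_dirac' _ hψ]
      constructor
      · simp
      · simpa using hφψ x
  | succ k ih =>
      intro θ φ ψ c hφ hψ hc hφψ Hψ
      set β : ℝ≥0∞ := ENNReal.ofReal (εm / εp) with hβdef
      set ρ : ℝ≥0∞ := ENNReal.ofReal (1 - εm / εp) with hρdef
      have hβfin : β ≠ ∞ := ENNReal.ofReal_ne_top
      have hρ_le_one : ρ ≤ 1 := ENNReal.ofReal_le_one.2 (by
        have : 0 ≤ εm / εp := by positivity
        linarith)
      have Hψ' : ∀ j, j < k → 0 < ∫⁻ y, (∫⁻ z, ψ z ∂(Qn M W j (zit (k - j) (shift θ)) y)) ∂ν ∧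
          ∫⁻ y, (∫⁻ z, ψ z ∂(Qn M W j (zit (k - j) (shift θ)) y)) ∂ν ≠ ∞ := by
        intro j hj
        have h2 : k + 1 - j = (k - j) + 1 := by omega
        have h3 := Hψ j (by omega)
        rw [h2, ← zit_shift] at h3
        exact h3
      obtain ⟨s, hsc, hs⟩ := ih (shift θ) φ ψ c hφ hψ hc hφψ Hψ'
      set g : E → ℝ≥0∞ := fun y => ∫⁻ z, φ z ∂(Qn M W k (shift θ) y) with hgdef
      set m : E → ℝ≥0∞ := fun y => ∫⁻ z, ψ z ∂(Qn M W k (shift θ) y) with hmdef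
      have hgmeas : Measurable g := measurable_Qn_lintegral hMmeas hWmeas k (shift θ) hφ
      have hmmeas : Measurable m := measurable_Qn_lintegral hMmeas hWmeas k (shift θ) hψ
      have hνm : 0 < ∫⁻ y, m y ∂ν ∧ ∫⁻ y, m y ∂ν ≠ ∞ := by
        have h3 := Hψ k (Nat.lt_succ_self k)
        rw [show k + 1 - k = 1 from by omega, zit_one] at h3
        exact h3
      set νm := ∫⁻ y, m y ∂ν with hνmdef
      set w : ℝ≥0∞ := ρ ^ k * c with hwdef
      have hwfin : w ≠ ∞ := ENNReal.mul_ne_top (ENNReal.pow_ne_top ENNReal.ofReal_ne_top) hc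
      set ξ : E → ℝ≥0∞ := fun y => g y - s * m y with hξdef
      have hξmeas : Measurable ξ := hgmeas.sub (hmmeas.const_mul s)
      have hξ_le : ∀ y, ξ y ≤ w * m y := by
        intro y
        refine tsub_le_iff_right.2 ?_
        calc g y ≤ (s + w) * m y := (hs y).2
        _ = w * m y + s * m y := by ring
      have hξ_add : ∀ y, s * m y + ξ y = g y := by
        intro y
        rw [add_comm]
        exact tsub_add_cancel_of_le (hs y).1
      have hνξ_le : ∫⁻ y, ξ y ∂ν ≤ w * νm := by
        calc ∫⁻ y, ξ y ∂ν ≤ ∫⁻ y, w * m y ∂ν := lintegral_mono hξ_le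
        _ = w * νm := lintegral_const_mul w hmmeas
      have hνξfin : ∫⁻ y, ξ y ∂ν ≠ ∞ :=
        (lt_of_le_of_lt hνξ_le (ENNReal.mul_lt_top hwfin.lt_top hνm.2.lt_top)).ne
      set u := (∫⁻ y, ξ y ∂ν) / νm with hudef
      have huw : u ≤ w := ENNReal.div_le_of_le_mul hνξ_le
      have huνm : u * νm = ∫⁻ y, ξ y ∂ν := ENNReal.div_mul_cancel hνm.1.ne' hνm.2
      have hρw : ρ * w = ρ ^ (k + 1) * c := by rw [hwdef, pow_succ]; ring
      refine ⟨s + β * u, ?_, ?_⟩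
      · -- invariant
        have hβu_ρw : β * u + ρ ^ (k + 1) * c ≤ w := by
          calc β * u + ρ ^ (k + 1) * c ≤ β * w + ρ * w := by
                rw [← hρw]
                exact add_le_add_left (mul_le_mul_right huw β) _
          _ = (β + ρ) * w := by ring
          _ = w := by rw [hβρ, one_mul]
        calc s + β * u + ρ ^ (k + 1) * c = s + (β * u + ρ ^ (k + 1) * c) := by ring
        _ ≤ s + w := add_le_add_right hβu_ρw s
        _ ≤ c := hsc
      · -- pointwise sandwich
        intro x
        have hQφ : ∫⁻ z, φ z ∂(Qn M W (k + 1) θ x)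
            = ENNReal.ofReal (W θ x) * ∫⁻ y, g y ∂(M θ x) := by
          rw [Qn_succ_front hMmeas hWmeas,
            Measure.lintegral_bind (measurable_Qn hMmeas hWmeas k (shift θ)).aemeasurable hφ.aemeasurable,
            lintegral_Qk]
        have hQψ : ∫⁻ z, ψ z ∂(Qn M W (k + 1) θ x)
            = ENNReal.ofReal (W θ x) * ∫⁻ y, m y ∂(M θ x) := by
          rw [Qn_succ_front hMmeas hWmeas,
            Measure.lintegral_bind (measurable_Qn hMmeas hWmeas k (shift θ)).aemeasurable hψ.aemeasurable,
            lintegral_Qk]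
        set Wx := ENNReal.ofReal (W θ x) with hWxdef
        set Mm := ∫⁻ y, m y ∂(M θ x) with hMmdef
        set Mξ := ∫⁻ y, ξ y ∂(M θ x) with hMξdef
        have hMg : ∫⁻ y, g y ∂(M θ x) = s * Mm + Mξ := by
          rw [hMmdef, hMξdef, ← lintegral_const_mul s hmmeas,
            ← lintegral_add_right _ hξmeas]
          exact lintegral_congr fun y => (hξ_add y).symm
        have hMm_le : Mm ≤ ENNReal.ofReal εp * νm := lintegral_M_le hB2b θ x m
        have hMmfin : Mm ≠ ∞ :=
          (lt_of_le_of_lt hMm_le (ENNReal.mul_lt_top ENNReal.ofReal_ne_top.lt_top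
            hνm.2.lt_top)).ne
        have hβMm : β * Mm ≤ ENNReal.ofReal εm * νm := by
          calc β * Mm ≤ β * (ENNReal.ofReal εp * νm) := mul_le_mul_right hMm_le β
          _ = (β * ENNReal.ofReal εp) * νm := by ring
          _ = ENNReal.ofReal εm * νm := by rw [hβεp]
        have hMξ_ge : β * u * Mm ≤ Mξ := by
          calc β * u * Mm = u * (β * Mm) := by ring
          _ ≤ u * (ENNReal.ofReal εm * νm) := mul_le_mul_right hβMm u
          _ = ENNReal.ofReal εm * (u * νm) := by ring
          _ = ENNReal.ofReal εm * ∫⁻ y, ξ y ∂ν := by rw [huνm]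
          _ ≤ Mξ := lintegral_M_ge hB2b θ x ξ
        set ζ : E → ℝ≥0∞ := fun y => w * m y - ξ y with hζdef
        have hζmeas : Measurable ζ := (hmmeas.const_mul w).sub hξmeas
        have hζ_add : ∀ y, ξ y + ζ y = w * m y := by
          intro y
          rw [add_comm]
          exact tsub_add_cancel_of_le (hξ_le y)
        have hνζ : ∫⁻ y, ζ y ∂ν = (w - u) * νm := by
          have h4 : ∫⁻ y, ζ y ∂ν = (∫⁻ y, w * m y ∂ν) - ∫⁻ y, ξ y ∂ν :=
            lintegral_sub hξmeas hνξfin (ae_of_all _ hξ_le)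
          rw [h4, lintegral_const_mul w hmmeas, ← huνm,
            ENNReal.sub_mul (fun _ _ => hνm.2)]
        have hMζ_ge : β * (w - u) * Mm ≤ ∫⁻ y, ζ y ∂(M θ x) := by
          calc β * (w - u) * Mm = (w - u) * (β * Mm) := by ring
          _ ≤ (w - u) * (ENNReal.ofReal εm * νm) := mul_le_mul_right hβMm _
          _ = ENNReal.ofReal εm * ((w - u) * νm) := by ring
          _ = ENNReal.ofReal εm * ∫⁻ y, ζ y ∂ν := by rw [hνζ]
          _ ≤ _ := lintegral_M_ge hB2b θ x ζ
        have hsum : Mξ + ∫⁻ y, ζ y ∂(M θ x) = w * Mm := by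
          rw [hMξdef, ← lintegral_add_right _ hζmeas, hMmdef, ← lintegral_const_mul w hmmeas]
          exact lintegral_congr fun y => hζ_add y
        have hcoef : (β * u + ρ * w) + β * (w - u) = w := by
          have h1 : β * u + β * (w - u) = β * w := by
            rw [← mul_add, add_tsub_cancel_of_le huw]
          calc (β * u + ρ * w) + β * (w - u) = (β * u + β * (w - u)) + ρ * w := by ring
          _ = β * w + ρ * w := by rw [h1]
          _ = (β + ρ) * w := by ring
          _ = w := by rw [hβρ, one_mul]
        have hd_fin : β * (w - u) * Mm ≠ ∞ :=
          ENNReal.mul_ne_top (ENNReal.mul_ne_top hβfin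
            ((tsub_le_self).trans_lt hwfin.lt_top).ne) hMmfin
        have hMξ_le : Mξ ≤ (β * u + ρ * w) * Mm := by
          have h2 : Mξ + β * (w - u) * Mm ≤ (β * u + ρ * w) * Mm + β * (w - u) * Mm := by
            calc Mξ + β * (w - u) * Mm ≤ Mξ + ∫⁻ y, ζ y ∂(M θ x) := add_le_add_right hMζ_ge Mξ
            _ = w * Mm := hsum
            _ = ((β * u + ρ * w) + β * (w - u)) * Mm := by rw [hcoef]
            _ = (β * u + ρ * w) * Mm + β * (w - u) * Mm := add_mul _ _ _
          exact (ENNReal.add_le_add_iff_right hd_fin).1 h2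
        constructor
        · rw [hQφ, hQψ, hMg]
          calc (s + β * u) * (Wx * Mm) = Wx * (s * Mm + β * u * Mm) := by ring
          _ ≤ Wx * (s * Mm + Mξ) := mul_le_mul_right (add_le_add_right hMξ_ge _) Wx
        · rw [hQφ, hQψ, hMg]
          calc Wx * (s * Mm + Mξ) ≤ Wx * (s * Mm + (β * u + ρ * w) * Mm) :=
                mul_le_mul_right (add_le_add_right hMξ_le _) Wx
          _ = (s + β * u + ρ * w) * (Wx * Mm) := by ring
          _ = (s + β * u + ρ ^ (k + 1) * c) * (Wx * Mm) := by rw [hρw]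

variable {Δ2 : ℝ}
variable (hB2c : ∀ n : ℕ, 1 ≤ n → ∀ ω, ∀ σ₁ σ₂ : Measure E,
    IsProbabilityMeasure σ₁ → IsProbabilityMeasure σ₂ →
    QnMass M W n ω σ₁ ≤ ENNReal.ofReal Δ2 * QnMass M W n ω σ₂)
variable (hB2d : ∀ n : ℕ, 1 ≤ n → ∀ ω, ∀ σ : Measure E, IsProbabilityMeasure σ →
    0 < QnMass M W n ω σ ∧ QnMass M W n ω σ < ∞)

include hMmeas hWmeas in
lemma bind_Qn_apply (n : ℕ) (θ : Env H) (σ : Measure E) {A : Set E} (hA : MeasurableSet A) :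
    (σ.bind (Qn M W n θ)) A = ∫⁻ x, Qn M W n θ x A ∂σ :=
  Measure.bind_apply hA (measurable_Qn hMmeas hWmeas n θ).aemeasurable

include hMmeas hWmeas in
lemma QnMass_eq (n : ℕ) (θ : Env H) (σ : Measure E) :
    QnMass M W n θ σ = ∫⁻ x, Qn M W n θ x Set.univ ∂σ :=
  bind_Qn_apply hMmeas hWmeas n θ σ MeasurableSet.univ

lemma QnMass_zero (θ : Env H) (σ : Measure E) : QnMass M W 0 θ σ = σ Set.univ := by
  unfold QnMass
  rw [Qn_zero_eq, Measure.bind_dirac]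

include hMmeas hWmeas in
lemma QnMass_dirac (n : ℕ) (θ : Env H) (x : E) :
    QnMass M W n θ (Measure.dirac x) = Qn M W n θ x Set.univ := by
  unfold QnMass
  rw [Measure.dirac_bind (measurable_Qn hMmeas hWmeas n θ)]

include hB2d in
lemma QnMass_nu (n : ℕ) (θ : Env H) :
    0 < QnMass M W n θ ν ∧ QnMass M W n θ ν ≠ ∞ := by
  rcases Nat.eq_zero_or_pos n with h | h
  · subst h
    rw [QnMass_zero, measure_univ]
    norm_num
  · exact ⟨(hB2d n h θ ν inferInstance).1, (hB2d n h θ ν inferInstance).2.ne⟩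

include hMprob hMmeas hWmeas in
lemma lintegral_W_Qn (k : ℕ) (θ : Env H) (x : E) :
    ∫⁻ y, ENNReal.ofReal (W (zit k θ) y) ∂(Qn M W k θ x) = Qn M W (k + 1) θ x Set.univ := by
  show _ = ((Qn M W k θ x).bind (Qk M W (zit k θ))) Set.univ
  rw [Measure.bind_apply MeasurableSet.univ (measurable_Qk hMmeas hWmeas _).aemeasurable]
  exact lintegral_congr fun y => (Qk_univ hMprob _ y).symm

include hMprob hMmeas hWmeas hB2d in
lemma Hpsi_one (k : ℕ) (θ : Env H) :
    ∀ j, j < k → 0 < ∫⁻ y, (∫⁻ z, (1:ℝ≥0∞) ∂(Qn M W j (zit (k - j) θ) y)) ∂ν ∧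
      ∫⁻ y, (∫⁻ z, (1:ℝ≥0∞) ∂(Qn M W j (zit (k - j) θ) y)) ∂ν ≠ ∞ := by
  intro j _
  have h1 : ∀ y, ∫⁻ z, (1:ℝ≥0∞) ∂(Qn M W j (zit (k - j) θ) y)
      = Qn M W j (zit (k - j) θ) y Set.univ := fun y => lintegral_one
  simp_rw [h1, ← QnMass_eq hMmeas hWmeas]
  exact QnMass_nu hB2d j (zit (k - j) θ)

include hMprob hMmeas hWmeas hB2d in
lemma Hpsi_W (k : ℕ) (θ : Env H) :
    ∀ j, j < k → 0 < ∫⁻ y, (∫⁻ z, ENNReal.ofReal (W (zit k θ) z)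
        ∂(Qn M W j (zit (k - j) θ) y)) ∂ν ∧
      ∫⁻ y, (∫⁻ z, ENNReal.ofReal (W (zit k θ) z) ∂(Qn M W j (zit (k - j) θ) y)) ∂ν ≠ ∞ := by
  intro j hj
  have hkj : (k - j) + j = k := by omega
  have hz : zit j (zit (k - j) θ) = zit k θ := by
    rw [zit_add, hkj]
  have h1 : ∀ y, ∫⁻ z, ENNReal.ofReal (W (zit k θ) z) ∂(Qn M W j (zit (k - j) θ) y)
      = Qn M W (j + 1) (zit (k - j) θ) y Set.univ := by
    intro y
    rw [← hz]
    exact lintegral_W_Qn hMprob hMmeas hWmeas j (zit (k - j) θ) y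
  simp_rw [h1, ← QnMass_eq hMmeas hWmeas]
  exact QnMass_nu hB2d (j + 1) (zit (k - j) θ)

-- Multiplicative sandwich for `x ↦ ∫ G dQ_n^θ(x)` against the mass `Q_n^θ(x)(E)`.
include hMprob hMmeas hWmeas hεm hεmp hB2b hB2d in
lemma lemE :
    ∀ (n : ℕ), 1 ≤ n → ∀ (θ : Env H) (G : E → ℝ≥0∞), Measurable G → (∫⁻ z, G z ∂ν ≠ ∞) →
    ∃ s : ℝ≥0∞,
      ENNReal.ofReal εm * ∫⁻ z, G z ∂ν ≤ s ∧ s ≤ ENNReal.ofReal εp * ∫⁻ z, G z ∂ν ∧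
      ∀ x, s * (Qn M W n θ x) Set.univ ≤ ∫⁻ z, G z ∂(Qn M W n θ x) ∧
        ∫⁻ z, G z ∂(Qn M W n θ x)
          ≤ (s + (ENNReal.ofReal (1 - εm / εp)) ^ n * (ENNReal.ofReal εp * ∫⁻ z, G z ∂ν))
            * (Qn M W n θ x) Set.univ := by
  have hεp : (0:ℝ) < εp := lt_of_lt_of_le hεm hεmp
  intro n hn θ G hG hGfin
  obtain ⟨k, rfl⟩ : ∃ k, n = k + 1 := ⟨n - 1, by omega⟩
  set νG := ∫⁻ z, G z ∂ν with hνGdef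
  set ψ : E → ℝ≥0∞ := fun y => ENNReal.ofReal (W (zit k θ) y) with hψdef
  have hψmeas : Measurable ψ := measurable_W_slice hWmeas _
  set φG : E → ℝ≥0∞ := fun y => ∫⁻ z, G z ∂(Qk M W (zit k θ) y) with hφGdef
  have hφGmeas : Measurable φG :=
    (Measure.measurable_lintegral hG).comp (measurable_Qk hMmeas hWmeas _)
  have hφG_ge : ∀ y, ENNReal.ofReal εm * νG * ψ y ≤ φG y := by
    intro y
    rw [hφGdef]
    simp only [lintegral_Qk]
    calc ENNReal.ofReal εm * νG * ψ y = ψ y * (ENNReal.ofReal εm * νG) := by ring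
    _ ≤ ψ y * ∫⁻ z, G z ∂(M (zit k θ) y) :=
        mul_le_mul_right (lintegral_M_ge hB2b _ y G) _
    _ = ENNReal.ofReal (W (zit k θ) y) * ∫⁻ z, G z ∂(M (zit k θ) y) := by rw [hψdef]
  have hφG_le : ∀ y, φG y ≤ ENNReal.ofReal εp * νG * ψ y := by
    intro y
    rw [hφGdef]
    simp only [lintegral_Qk]
    calc ENNReal.ofReal (W (zit k θ) y) * ∫⁻ z, G z ∂(M (zit k θ) y)
        ≤ ψ y * (ENNReal.ofReal εp * νG) := mul_le_mul_right (lintegral_M_le hB2b _ y G) _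
    _ = ENNReal.ofReal εp * νG * ψ y := by ring
  set c : ℝ≥0∞ := ENNReal.ofReal (εp - εm) * νG with hcdef
  have hcfin : c ≠ ∞ := ENNReal.mul_ne_top ENNReal.ofReal_ne_top hGfin
  have hcm : c + ENNReal.ofReal εm * νG = ENNReal.ofReal εp * νG := by
    rw [hcdef, ← add_mul, ← ENNReal.ofReal_add (by linarith) hεm.le]
    congr 2
    ring
  set φ' : E → ℝ≥0∞ := fun y => φG y - ENNReal.ofReal εm * νG * ψ y with hφ'def
  have hφ'meas : Measurable φ' := hφGmeas.sub (hψmeas.const_mul _)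
  have hφ'_le : ∀ y, φ' y ≤ c * ψ y := by
    intro y
    refine tsub_le_iff_right.2 ?_
    calc φG y ≤ ENNReal.ofReal εp * νG * ψ y := hφG_le y
    _ = (c + ENNReal.ofReal εm * νG) * ψ y := by rw [hcm]
    _ = c * ψ y + ENNReal.ofReal εm * νG * ψ y := add_mul _ _ _
  have hφ'_add : ∀ y, φ' y + ENNReal.ofReal εm * νG * ψ y = φG y := fun y =>
    tsub_add_cancel_of_le (hφG_ge y)
  obtain ⟨s', hs'c, hs'⟩ := lemB hMmeas hWmeas hεm hεmp hB2b k θ φ' ψ c hφ'meas hψmeas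
    hcfin hφ'_le (Hpsi_W hMprob hMmeas hWmeas hB2d k θ)
  have hs'_le_c : s' ≤ c := le_trans le_self_add hs'c
  refine ⟨s' + ENNReal.ofReal εm * νG, le_add_self, ?_, ?_⟩
  · calc s' + ENNReal.ofReal εm * νG ≤ c + ENNReal.ofReal εm * νG :=
        add_le_add_left hs'_le_c _
    _ = ENNReal.ofReal εp * νG := hcm
  intro x
  have hIψ : ∫⁻ y, ψ y ∂(Qn M W k θ x) = Qn M W (k + 1) θ x Set.univ :=
    lintegral_W_Qn hMprob hMmeas hWmeas k θ x
  have hIφG : ∫⁻ y, φG y ∂(Qn M W k θ x) = ∫⁻ z, G z ∂(Qn M W (k + 1) θ x) := by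
    show _ = ∫⁻ z, G z ∂((Qn M W k θ x).bind (Qk M W (zit k θ)))
    rw [Measure.lintegral_bind (measurable_Qk hMmeas hWmeas _).aemeasurable hG.aemeasurable]
  have hsplit : ∫⁻ y, φG y ∂(Qn M W k θ x)
      = (∫⁻ y, φ' y ∂(Qn M W k θ x))
        + ENNReal.ofReal εm * νG * ∫⁻ y, ψ y ∂(Qn M W k θ x) := by
    rw [← lintegral_const_mul _ hψmeas, ← lintegral_add_left hφ'meas]
    exact lintegral_congr fun y => (hφ'_add y).symm
  have hwidth : (ENNReal.ofReal (1 - εm / εp)) ^ k * c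
      = (ENNReal.ofReal (1 - εm / εp)) ^ (k + 1) * (ENNReal.ofReal εp * νG) := by
    have h5 : ENNReal.ofReal (εp - εm)
        = ENNReal.ofReal (1 - εm / εp) * ENNReal.ofReal εp := by
      rw [← ENNReal.ofReal_mul (by
        have : εm / εp ≤ 1 := (div_le_one hεp).2 hεmp
        linarith)]
      congr 1
      field_simp
    rw [hcdef, h5, pow_succ]
    ring
  constructor
  · rw [← hIφG, ← hIψ, hsplit]
    calc (s' + ENNReal.ofReal εm * νG) * ∫⁻ y, ψ y ∂(Qn M W k θ x)
        = s' * (∫⁻ y, ψ y ∂(Qn M W k θ x))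
          + ENNReal.ofReal εm * νG * ∫⁻ y, ψ y ∂(Qn M W k θ x) := add_mul _ _ _
    _ ≤ _ := add_le_add_left (hs' x).1 _
  · rw [← hIφG, ← hIψ, hsplit]
    calc (∫⁻ y, φ' y ∂(Qn M W k θ x))
          + ENNReal.ofReal εm * νG * ∫⁻ y, ψ y ∂(Qn M W k θ x)
        ≤ (s' + (ENNReal.ofReal (1 - εm / εp)) ^ k * c) * (∫⁻ y, ψ y ∂(Qn M W k θ x))
          + ENNReal.ofReal εm * νG * ∫⁻ y, ψ y ∂(Qn M W k θ x) :=
          add_le_add_left (hs' x).2 _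
    _ = (s' + ENNReal.ofReal εm * νG + (ENNReal.ofReal (1 - εm / εp)) ^ k * c)
          * ∫⁻ y, ψ y ∂(Qn M W k θ x) := by ring
    _ = _ := by rw [hwidth]
include hB2d in
lemma QnMass_prob (n : ℕ) (θ : Env H) (σ : Measure E) (hσ : IsProbabilityMeasure σ) :
    0 < QnMass M W n θ σ ∧ QnMass M W n θ σ ≠ ∞ := by
  rcases Nat.eq_zero_or_pos n with h | h
  · subst h
    rw [QnMass_zero, measure_univ]
    norm_num
  · exact ⟨(hB2d n h θ σ hσ).1, (hB2d n h θ σ hσ).2.ne⟩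

-- Master sandwich: for all horizons `m ≥ n` and all initial laws `σ`, the backward
-- normalized measures lie in a common interval of width `ρ^n`.
include hMprob hMmeas hWmeas hεm hεmp hB2b hB2d in
lemma lemS (ω : Env H) (n : ℕ) {A : Set E} (hA : MeasurableSet A) :
    ∃ s : ℝ≥0∞, ∀ m : ℕ, n ≤ m → ∀ σ : Measure E, IsProbabilityMeasure σ →
      s ≤ PhiSet M W m (zitInv m ω) σ A ∧
      PhiSet M W m (zitInv m ω) σ A ≤ s + (ENNReal.ofReal (1 - εm / εp)) ^ n := by
  obtain ⟨s, _, hs⟩ := lemB hMmeas hWmeas hεm hεmp hB2b n (zitInv n ω)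
    (A.indicator 1) (fun _ => 1) 1 (measurable_one.indicator hA) measurable_const
    one_ne_top (fun y => by by_cases hy : y ∈ A <;> simp [Set.indicator, hy])
    (Hpsi_one hMprob hMmeas hWmeas hB2d n (zitInv n ω))
  set w := (ENNReal.ofReal (1 - εm / εp)) ^ n with hwdef
  have hpt : ∀ x, s * Qn M W n (zitInv n ω) x Set.univ ≤ Qn M W n (zitInv n ω) x A ∧
      Qn M W n (zitInv n ω) x A ≤ (s + w) * Qn M W n (zitInv n ω) x Set.univ := by
    intro x
    have h1 := hs x
    rw [lintegral_indicator_one hA, lintegral_one, mul_one] at h1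
    exact h1
  refine ⟨s, ?_⟩
  intro m hnm σ hσ
  obtain ⟨j, rfl⟩ : ∃ j, m = j + n := ⟨m - n, by omega⟩
  have h2 : zit j (zitInv (j + n) ω) = zitInv n ω := zit_zitInv j n ω
  have hcomp : σ.bind (Qn M W (j + n) (zitInv (j + n) ω))
      = (σ.bind (Qn M W j (zitInv (j + n) ω))).bind (Qn M W n (zitInv n ω)) := by
    rw [Measure.bind_bind (measurable_Qn hMmeas hWmeas _ _).aemeasurable (measurable_Qn hMmeas hWmeas _ _).aemeasurable]
    have h3 : (Qn M W (j + n) (zitInv (j + n) ω))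
        = fun x => (Qn M W j (zitInv (j + n) ω) x).bind (Qn M W n (zitInv n ω)) := by
      funext x
      rw [Qn_add hMmeas hWmeas n j _ x, h2]
    rw [h3]
  set σ'' := σ.bind (Qn M W j (zitInv (j + n) ω)) with hσ''def
  set X := (σ.bind (Qn M W (j + n) (zitInv (j + n) ω))) A with hXdef
  set Y := QnMass M W (j + n) (zitInv (j + n) ω) σ with hYdef
  have hY := QnMass_prob hB2d (j + n) (zitInv (j + n) ω) σ hσ
  have hXeq : X = ∫⁻ x, Qn M W n (zitInv n ω) x A ∂σ'' := by
    rw [hXdef, hcomp, bind_Qn_apply hMmeas hWmeas n _ σ'' hA]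
  have hYeq : Y = ∫⁻ x, Qn M W n (zitInv n ω) x Set.univ ∂σ'' := by
    rw [hYdef]
    unfold QnMass
    rw [hcomp, bind_Qn_apply hMmeas hWmeas n _ σ'' MeasurableSet.univ]
  have hXlow : s * Y ≤ X := by
    rw [hXeq, hYeq, ← lintegral_const_mul s
      (measurable_Qn_set hMmeas hWmeas n _ MeasurableSet.univ)]
    exact lintegral_mono fun x => (hpt x).1
  have hXhigh : X ≤ (s + w) * Y := by
    rw [hXeq, hYeq, ← lintegral_const_mul (s + w)
      (measurable_Qn_set hMmeas hWmeas n _ MeasurableSet.univ)]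
    exact lintegral_mono fun x => (hpt x).2
  have hPhi : PhiSet M W (j + n) (zitInv (j + n) ω) σ A = X / Y := rfl
  constructor
  · rw [hPhi]
    exact (ENNReal.le_div_iff_mul_le (Or.inl hY.1.ne') (Or.inl hY.2)).2 hXlow
  · rw [hPhi]
    exact ENNReal.div_le_of_le_mul hXhigh

include hMprob hMmeas hWmeas hεm hεmp hB2b hB2d in
lemma PhiSet_le_nu (n : ℕ) (hn : 1 ≤ n) (θ : Env H) (σ : Measure E)
    (hσ : IsProbabilityMeasure σ) {A : Set E} (hA : MeasurableSet A) :
    PhiSet M W n θ σ A ≤ ENNReal.ofReal εp * ν A := by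
  obtain ⟨k, rfl⟩ : ∃ k, n = k + 1 := ⟨n - 1, by omega⟩
  have hcomp : σ.bind (Qn M W (k + 1) θ)
      = (σ.bind (Qn M W k θ)).bind (Qk M W (zit k θ)) := by
    rw [Measure.bind_bind (measurable_Qn hMmeas hWmeas _ _).aemeasurable (measurable_Qk hMmeas hWmeas _).aemeasurable]
    rfl
  set κ := σ.bind (Qn M W k θ) with hκdef
  have hX : (σ.bind (Qn M W (k + 1) θ)) A
      = ∫⁻ y, Qk M W (zit k θ) y A ∂κ := by
    rw [hcomp, Measure.bind_apply hA (measurable_Qk hMmeas hWmeas _).aemeasurable]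
  have hY : QnMass M W (k + 1) θ σ = ∫⁻ y, ENNReal.ofReal (W (zit k θ) y) ∂κ := by
    unfold QnMass
    rw [hcomp, Measure.bind_apply MeasurableSet.univ (measurable_Qk hMmeas hWmeas _).aemeasurable]
    exact lintegral_congr fun y => Qk_univ hMprob _ y
  have hXY : (σ.bind (Qn M W (k + 1) θ)) A
      ≤ ENNReal.ofReal εp * ν A * QnMass M W (k + 1) θ σ := by
    rw [hX, hY, ← lintegral_const_mul _ (measurable_W_slice hWmeas _)]
    refine lintegral_mono fun y => ?_
    show Qk M W (zit k θ) y A ≤ _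
    have h1 : Qk M W (zit k θ) y A = ENNReal.ofReal (W (zit k θ) y) * M (zit k θ) y A := by
      simp [Qk, Measure.smul_apply, smul_eq_mul]
    rw [h1]
    calc ENNReal.ofReal (W (zit k θ) y) * M (zit k θ) y A
        ≤ ENNReal.ofReal (W (zit k θ) y) * (ENNReal.ofReal εp * ν A) :=
          mul_le_mul_right (hB2b (zit k θ) y A hA).2 _
    _ = ENNReal.ofReal εp * ν A * ENNReal.ofReal (W (zit k θ) y) := by ring
  exact ENNReal.div_le_of_le_mul hXY

include hMmeas hWmeas in
lemma PhiSet_iUnion (n : ℕ) (θ : Env H) (σ : Measure E) {f : ℕ → Set E}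
    (hf : ∀ i, MeasurableSet (f i)) (hdis : Pairwise (Function.onFun Disjoint f)) :
    PhiSet M W n θ σ (⋃ i, f i) = ∑' i, PhiSet M W n θ σ (f i) := by
  unfold PhiSet
  rw [measure_iUnion hdis hf]
  simp only [div_eq_mul_inv]
  exact ENNReal.tsum_mul_right.symm
/-- The candidate limit `η^ω(A)`, defined with the reference measure `ν`. -/
def etaSet (M : Env H → E → Measure E) (W : Env H → E → ℝ) (ν : Measure E)
    (ω : Env H) (A : Set E) : ℝ≥0∞ :=
  Filter.limsup (fun n => PhiSet M W n (zitInv n ω) ν A) atTop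

include hMprob hMmeas hWmeas hεm hεmp hB2b hB2d in
lemma etaSet_bounds (ω : Env H) (n : ℕ) {A : Set E} (hA : MeasurableSet A)
    (σ : Measure E) (hσ : IsProbabilityMeasure σ) :
    etaSet M W ν ω A ≤ PhiSet M W n (zitInv n ω) σ A + (ENNReal.ofReal (1 - εm / εp)) ^ n ∧
    PhiSet M W n (zitInv n ω) σ A ≤ etaSet M W ν ω A + (ENNReal.ofReal (1 - εm / εp)) ^ n := by
  obtain ⟨s, hs⟩ := lemS hMprob hMmeas hWmeas hεm hεmp hB2b hB2d ω n hA
  set w := (ENNReal.ofReal (1 - εm / εp)) ^ n with hwdef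
  have hup : etaSet M W ν ω A ≤ s + w := by
    refine Filter.limsup_le_of_le (by isBoundedDefault) ?_
    exact eventually_atTop.2 ⟨n, fun m hm => (hs m hm ν inferInstance).2⟩
  have hlow : s ≤ etaSet M W ν ω A :=
    le_limsup_of_frequently_le'
      ((eventually_atTop.2 ⟨n, fun m hm => (hs m hm ν inferInstance).1⟩).frequently)
  constructor
  · exact hup.trans (add_le_add_left (hs n le_rfl σ hσ).1 w)
  · exact (hs n le_rfl σ hσ).2.trans (add_le_add_left hlow w)

include hεm hεmp in
lemma rho_lt_one : ENNReal.ofReal (1 - εm / εp) < 1 := by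
  have hεp : (0:ℝ) < εp := lt_of_lt_of_le hεm hεmp
  rw [show (1:ℝ≥0∞) = ENNReal.ofReal 1 from ENNReal.ofReal_one.symm]
  rw [ENNReal.ofReal_lt_ofReal_iff one_pos]
  have : 0 < εm / εp := by positivity
  linarith

include hMprob hMmeas hWmeas hεm hεmp hB2b hB2d in
lemma etaSet_tendsto (ω : Env H) {A : Set E} (hA : MeasurableSet A)
    (σ : Measure E) (hσ : IsProbabilityMeasure σ) :
    Tendsto (fun n => PhiSet M W n (zitInv n ω) σ A) atTop (𝓝 (etaSet M W ν ω A)) := by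
  have hfin : etaSet M W ν ω A ≠ ∞ := by
    have h1 : ∀ n : ℕ, PhiSet M W n (zitInv n ω) ν A ≤ 1 := by
      intro n
      refine ENNReal.div_le_of_le_mul ?_
      rw [one_mul]
      exact measure_mono (Set.subset_univ A)
    exact ((Filter.limsup_le_of_le (by isBoundedDefault)
      (Eventually.of_forall h1)).trans_lt one_lt_top).ne
  rw [ENNReal.tendsto_nhds hfin]
  intro ε hε
  have hpow := ENNReal.tendsto_pow_atTop_nhds_zero_of_lt_one (rho_lt_one hεm hεmp)
  filter_upwards [hpow.eventually_lt_const hε] with n hn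
  have hb := etaSet_bounds hMprob hMmeas hWmeas hεm hεmp hB2b hB2d ω n hA σ hσ
  constructor
  · exact tsub_le_iff_right.2 (hb.1.trans (add_le_add_right hn.le _))
  · exact hb.2.trans (add_le_add_right hn.le _)

include hMprob hMmeas hWmeas hεm hεmp hB2b hB2d in
lemma eta_exists : ∃ η : Env H → Measure E,
    (∀ ω, IsProbabilityMeasure (η ω)) ∧
    (∀ ω (A : Set E), MeasurableSet A → η ω A = etaSet M W ν ω A) := by
  have hη : ∀ ω : Env H, ∃ ηω : Measure E,
      ∀ A : Set E, MeasurableSet A → ηω A = etaSet M W ν ω A := by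
    intro ω
    have htend : ∀ (B : Set E), MeasurableSet B →
        Tendsto (fun n => PhiSet M W n (zitInv n ω) ν B) atTop (𝓝 (etaSet M W ν ω B)) :=
      fun B hB => etaSet_tendsto hMprob hMmeas hWmeas hεm hεmp hB2b hB2d ω hB ν inferInstance
    refine ⟨Measure.ofMeasurable (fun A _ => etaSet M W ν ω A) ?_ ?_,
      fun A hA => Measure.ofMeasurable_apply A hA⟩
    · have h0 : (fun n => PhiSet M W n (zitInv n ω) ν ∅) = fun _ => 0 := by
        funext n
        unfold PhiSet
        simp
      show Filter.limsup (fun n => PhiSet M W n (zitInv n ω) ν ∅) atTop = 0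
      rw [h0, limsup_const]
    · intro f hf hdis
      have hU : MeasurableSet (⋃ i, f i) := MeasurableSet.iUnion hf
      have hge : ∑' i, etaSet M W ν ω (f i) ≤ etaSet M W ν ω (⋃ i, f i) := by
        rw [ENNReal.tsum_eq_iSup_sum]
        refine iSup_le fun s => ?_
        refine le_of_tendsto_of_tendsto'
          (tendsto_finset_sum s fun i _ => htend (f i) (hf i)) (htend _ hU) fun n => ?_
        calc ∑ i ∈ s, PhiSet M W n (zitInv n ω) ν (f i)
            ≤ ∑' i, PhiSet M W n (zitInv n ω) ν (f i) := ENNReal.sum_le_tsum s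
        _ = PhiSet M W n (zitInv n ω) ν (⋃ i, f i) :=
            (PhiSet_iUnion hMmeas hWmeas n _ ν hf hdis).symm
      have hle : etaSet M W ν ω (⋃ i, f i) ≤ ∑' i, etaSet M W ν ω (f i) := by
        refine ENNReal.le_of_forall_pos_le_add fun ε hε _ => ?_
        have hsum : ∑' i, ν (f i) ≠ ∞ := by
          rw [← measure_iUnion hdis hf]
          exact (measure_lt_top ν _).ne
        have htail : Tendsto (fun K => ENNReal.ofReal εp * ∑' i, ν (f (i + K))) atTop (𝓝 0) := by
          have h0 := ENNReal.tendsto_sum_nat_add (fun i => ν (f i)) hsum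
          have h1 := ENNReal.Tendsto.const_mul (a := ENNReal.ofReal εp) h0
            (Or.inr ENNReal.ofReal_ne_top)
          simpa using h1
        have hεpos : (0:ℝ≥0∞) < ε := by exact_mod_cast hε
        obtain ⟨K, hK⟩ := (htail.eventually_lt_const hεpos).exists
        have htailm : MeasurableSet (⋃ i, f (i + K)) := MeasurableSet.iUnion fun i => hf _
        have hsplitn : ∀ n : ℕ, 1 ≤ n → PhiSet M W n (zitInv n ω) ν (⋃ i, f i)
            ≤ (∑ i ∈ Finset.range K, PhiSet M W n (zitInv n ω) ν (f i))
              + ENNReal.ofReal εp * ν (⋃ i, f (i + K)) := by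
          intro n hn
          have hsub : (⋃ i, f i) ⊆ (⋃ i ∈ Finset.range K, f i) ∪ ⋃ i, f (i + K) := by
            intro x hx
            rcases Set.mem_iUnion.1 hx with ⟨i, hi⟩
            by_cases h : i < K
            · exact Or.inl (Set.mem_biUnion (Finset.mem_range.2 h) hi)
            · refine Or.inr (Set.mem_iUnion.2 ⟨i - K, ?_⟩)
              rwa [Nat.sub_add_cancel (le_of_not_gt h)]
          calc PhiSet M W n (zitInv n ω) ν (⋃ i, f i)
              ≤ ((ν.bind (Qn M W n (zitInv n ω))) ((⋃ i ∈ Finset.range K, f i) ∪ ⋃ i, f (i + K)))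
                / QnMass M W n (zitInv n ω) ν :=
              ENNReal.div_le_div_right (measure_mono hsub) _
          _ ≤ ((ν.bind (Qn M W n (zitInv n ω))) (⋃ i ∈ Finset.range K, f i)
                + (ν.bind (Qn M W n (zitInv n ω))) (⋃ i, f (i + K)))
                / QnMass M W n (zitInv n ω) ν :=
              ENNReal.div_le_div_right (measure_union_le _ _) _
          _ = (∑ i ∈ Finset.range K, PhiSet M W n (zitInv n ω) ν (f i))
                + PhiSet M W n (zitInv n ω) ν (⋃ i, f (i + K)) := by
              rw [ENNReal.add_div,
                measure_biUnion_finset (fun i _ j _ hij => hdis hij) (fun i _ => hf i)]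
              unfold PhiSet
              congr 1
              simp only [div_eq_mul_inv, Finset.sum_mul]
          _ ≤ _ := by
              refine add_le_add_right ?_ _
              exact PhiSet_le_nu hMprob hMmeas hWmeas hεm hεmp hB2b hB2d n hn _ ν
                inferInstance htailm
        have h2 : etaSet M W ν ω (⋃ i, f i)
            ≤ (∑ i ∈ Finset.range K, etaSet M W ν ω (f i))
              + ENNReal.ofReal εp * ν (⋃ i, f (i + K)) := by
          refine le_of_tendsto_of_tendsto (htend _ hU)
            ((tendsto_finset_sum _ fun i _ => htend _ (hf i)).add tendsto_const_nhds) ?_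
          exact eventually_atTop.2 ⟨1, hsplitn⟩
        have h3 : ENNReal.ofReal εp * ν (⋃ i, f (i + K)) ≤ ε := by
          refine le_trans (mul_le_mul_right (measure_iUnion_le _) _) ?_
          exact hK.le
        calc etaSet M W ν ω (⋃ i, f i)
            ≤ (∑ i ∈ Finset.range K, etaSet M W ν ω (f i))
              + ENNReal.ofReal εp * ν (⋃ i, f (i + K)) := h2
        _ ≤ (∑' i, etaSet M W ν ω (f i)) + ε :=
            add_le_add (ENNReal.sum_le_tsum _) h3
      exact le_antisymm hle hge
  choose η hηspec using hη
  refine ⟨η, ?_, fun ω A hA => hηspec ω A hA⟩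
  intro ω
  constructor
  rw [hηspec ω Set.univ MeasurableSet.univ]
  have h1 : (fun n => PhiSet M W n (zitInv n ω) ν Set.univ) = fun _ => (1:ℝ≥0∞) := by
    funext n
    have h2 := QnMass_prob hB2d n (zitInv n ω) ν inferInstance
    exact ENNReal.div_self h2.1.ne' h2.2
  unfold etaSet
  rw [h1, limsup_const]
include hMmeas hWmeas hB2c hB2d ν in
lemma Fn_pos_fin (hΔ2 : 0 < Δ2) (n : ℕ) (ω : Env H) (x : E) :
    0 < Qn M W n ω x Set.univ ∧ Qn M W n ω x Set.univ ≠ ∞ := by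
  rcases Nat.eq_zero_or_pos n with h | h
  · subst h
    simp [Qn_zero_eq]
  have hfin := (hB2d n h ω (Measure.dirac x) inferInstance).2
  rw [QnMass_dirac hMmeas hWmeas] at hfin
  refine ⟨?_, hfin.ne⟩
  have hpos := (hB2d n h ω ν inferInstance).1
  have hc := hB2c n h ω ν (Measure.dirac x) inferInstance inferInstance
  rw [QnMass_dirac hMmeas hWmeas] at hc
  by_contra h0
  push_neg at h0
  rw [le_zero_iff] at h0
  rw [h0, mul_zero] at hc
  exact absurd (le_antisymm hc hpos.le).symm hpos.ne

include hMprob hMmeas hWmeas hεm hεmp hB2b hB2c hB2d in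
lemma ratioH_interval (hΔ2 : 0 < Δ2) (n : ℕ) (hn : 1 ≤ n) (ω : Env H) (x : E) :
    ∃ L U : ℝ≥0∞, 0 < L ∧ U ≠ ∞ ∧
      U ≤ (1 + ENNReal.ofReal (εp / εm) * (ENNReal.ofReal (1 - εm / εp)) ^ n) ^ 3 * L ∧
      U ≤ ENNReal.ofReal (Δ2 / εm)
          * (1 + ENNReal.ofReal (εp / εm) * (ENNReal.ofReal (1 - εm / εp)) ^ n) ∧
      ∀ m, n ≤ m → ∀ σ : Measure E, IsProbabilityMeasure σ →
        L ≤ ratioH M W σ m ω x ∧ ratioH M W σ m ω x ≤ U := by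
  have hεp : (0:ℝ) < εp := lt_of_lt_of_le hεm hεmp
  set ρe : ℝ≥0∞ := ENNReal.ofReal (1 - εm / εp) with hρedef
  set D : ℝ≥0∞ := ENNReal.ofReal (εp / εm) * ρe ^ n with hDdef
  have hDfin : D ≠ ∞ :=
    ENNReal.mul_ne_top ENNReal.ofReal_ne_top (ENNReal.pow_ne_top ENNReal.ofReal_ne_top)
  have h1Dfin : (1 + D) ≠ ∞ := by simp [hDfin]
  have h1D0 : (1 + D) ≠ 0 := by simp
  set θn := zitInv n ω with hθdef
  have hzit : zit n θn = ω := by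
    rw [hθdef]
    have := zit_zitInv n 0 ω
    rwa [Nat.add_zero] at this
  set Fn : E → ℝ≥0∞ := fun y => Qn M W n ω y Set.univ with hFndef
  have hFnmeas : Measurable Fn := measurable_Qn_set hMmeas hWmeas n ω MeasurableSet.univ
  have hνFn : ∫⁻ y, Fn y ∂ν = QnMass M W n ω ν := (QnMass_eq hMmeas hWmeas n ω ν).symm
  have hνFn_pos : 0 < ∫⁻ y, Fn y ∂ν := by rw [hνFn]; exact (QnMass_nu hB2d n ω).1
  have hνFn_fin : ∫⁻ y, Fn y ∂ν ≠ ∞ := by rw [hνFn]; exact (QnMass_nu hB2d n ω).2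
  obtain ⟨s2, hs2low, hs2up, hs2⟩ := lemE hMprob hMmeas hWmeas hεm hεmp hB2b hB2d
    n hn θn Fn hFnmeas hνFn_fin
  set w2 : ℝ≥0∞ := ρe ^ n * (ENNReal.ofReal εp * ∫⁻ y, Fn y ∂ν) with hw2def
  have hs2pos : 0 < s2 := lt_of_lt_of_le
    (ENNReal.mul_pos (ENNReal.ofReal_pos.2 hεm).ne' hνFn_pos.ne') hs2low
  have hs2fin : s2 ≠ ∞ :=
    (lt_of_le_of_lt hs2up (ENNReal.mul_lt_top ENNReal.ofReal_lt_top hνFn_fin.lt_top)).ne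
  have hεpm : ENNReal.ofReal (εp / εm) * ENNReal.ofReal εm = ENNReal.ofReal εp := by
    rw [← ENNReal.ofReal_mul (by positivity)]
    congr 1
    field_simp
  have hw2D : w2 ≤ D * s2 := by
    calc w2 = ρe ^ n * (ENNReal.ofReal (εp / εm) * (ENNReal.ofReal εm * ∫⁻ y, Fn y ∂ν)) := by
          rw [hw2def, ← hεpm]; ring
    _ ≤ ρe ^ n * (ENNReal.ofReal (εp / εm) * s2) := by
          exact mul_le_mul_right (mul_le_mul_right hs2low _) _
    _ = D * s2 := by rw [hDdef]; ring
  have hs2w2 : s2 + w2 ≤ (1 + D) * s2 := by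
    rw [add_mul, one_mul]
    exact add_le_add_right hw2D s2
  have hs2w2fin : s2 + w2 ≠ ∞ := by
    refine ENNReal.add_ne_top.2 ⟨hs2fin, ?_⟩
    exact ENNReal.mul_ne_top (ENNReal.pow_ne_top ENNReal.ofReal_ne_top)
      (ENNReal.mul_ne_top ENNReal.ofReal_ne_top hνFn_fin)
  have hFnx := Fn_pos_fin (ν := ν) hMmeas hWmeas hB2c hB2d hΔ2 n ω x
  refine ⟨Fn x / ((1 + D) * (s2 + w2)), (1 + D) * (Fn x / s2), ?_, ?_, ?_, ?_, ?_⟩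
  · exact ENNReal.div_pos hFnx.1.ne' (ENNReal.mul_ne_top h1Dfin hs2w2fin)
  · exact ENNReal.mul_ne_top h1Dfin (ENNReal.div_lt_top hFnx.2 hs2pos.ne').ne
  · -- U ≤ (1+D)^3 L
    have hstep : Fn x / s2 ≤ (1 + D) ^ 2 * (Fn x / ((1 + D) * (s2 + w2))) := by
      have h3 : Fn x / s2 = ((1 + D) ^ 2 * Fn x) / ((1 + D) ^ 2 * s2) :=
        (ENNReal.mul_div_mul_left _ _ (pow_ne_zero 2 h1D0)
          (ENNReal.pow_ne_top h1Dfin)).symm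
      have h4 : (1 + D) * (s2 + w2) ≤ (1 + D) ^ 2 * s2 := by
        calc (1 + D) * (s2 + w2) ≤ (1 + D) * ((1 + D) * s2) := mul_le_mul_right hs2w2 _
        _ = (1 + D) ^ 2 * s2 := by ring
      rw [h3, mul_div_assoc]
      exact mul_le_mul_right (ENNReal.div_le_div_left h4 _) _
    calc (1 + D) * (Fn x / s2) ≤ (1 + D) * ((1 + D) ^ 2 * (Fn x / ((1 + D) * (s2 + w2)))) :=
          mul_le_mul_right hstep _
    _ = (1 + D) ^ 3 * (Fn x / ((1 + D) * (s2 + w2))) := by ring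
  · -- absolute bound
    have h5 : Fn x ≤ ENNReal.ofReal (Δ2 / εm) * s2 := by
      have h6 : Fn x ≤ ENNReal.ofReal Δ2 * QnMass M W n ω ν := by
        have hc := hB2c n hn ω (Measure.dirac x) ν inferInstance inferInstance
        rwa [QnMass_dirac hMmeas hWmeas] at hc
      have h7 : ENNReal.ofReal (Δ2 / εm) * ENNReal.ofReal εm = ENNReal.ofReal Δ2 := by
        rw [← ENNReal.ofReal_mul (by positivity)]
        congr 1
        field_simp
      calc Fn x ≤ ENNReal.ofReal Δ2 * QnMass M W n ω ν := h6
      _ = ENNReal.ofReal (Δ2 / εm) * (ENNReal.ofReal εm * ∫⁻ y, Fn y ∂ν) := by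
          rw [← hνFn, ← h7]; ring
      _ ≤ ENNReal.ofReal (Δ2 / εm) * s2 := mul_le_mul_right hs2low _
    calc (1 + D) * (Fn x / s2) ≤ (1 + D) * ENNReal.ofReal (Δ2 / εm) :=
          mul_le_mul_right (ENNReal.div_le_of_le_mul h5) _
    _ = ENNReal.ofReal (Δ2 / εm) * (1 + D) := mul_comm _ _
  -- main interval membership
  intro m hm σ hσ
  obtain ⟨j, rfl⟩ : ∃ j, m = n + j := ⟨m - n, by omega⟩
  set G : E → ℝ≥0∞ := fun y => Qn M W j (zit n ω) y Set.univ with hGdef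
  have hGmeas : Measurable G := measurable_Qn_set hMmeas hWmeas j _ MeasurableSet.univ
  have hνG : ∫⁻ y, G y ∂ν = QnMass M W j (zit n ω) ν := (QnMass_eq hMmeas hWmeas j _ ν).symm
  have hνG_pos : 0 < ∫⁻ y, G y ∂ν := by rw [hνG]; exact (QnMass_nu hB2d j _).1
  have hνG_fin : ∫⁻ y, G y ∂ν ≠ ∞ := by rw [hνG]; exact (QnMass_nu hB2d j _).2
  obtain ⟨sG, hsGlow, hsGup, hsG⟩ := lemE hMprob hMmeas hWmeas hεm hεmp hB2b hB2d
    n hn ω G hGmeas hνG_fin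
  set wG : ℝ≥0∞ := ρe ^ n * (ENNReal.ofReal εp * ∫⁻ y, G y ∂ν) with hwGdef
  have hsGpos : 0 < sG := lt_of_lt_of_le
    (ENNReal.mul_pos (ENNReal.ofReal_pos.2 hεm).ne' hνG_pos.ne') hsGlow
  have hsGfin : sG ≠ ∞ :=
    (lt_of_le_of_lt hsGup (ENNReal.mul_lt_top ENNReal.ofReal_lt_top hνG_fin.lt_top)).ne
  have hwGD : wG ≤ D * sG := by
    calc wG = ρe ^ n * (ENNReal.ofReal (εp / εm) * (ENNReal.ofReal εm * ∫⁻ y, G y ∂ν)) := by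
          rw [hwGdef, ← hεpm]; ring
    _ ≤ ρe ^ n * (ENNReal.ofReal (εp / εm) * sG) := by
          exact mul_le_mul_right (mul_le_mul_right hsGlow _) _
    _ = D * sG := by rw [hDdef]; ring
  have hsGwG : sG + wG ≤ (1 + D) * sG := by
    rw [add_mul, one_mul]
    exact add_le_add_right hwGD sG
  -- pointwise sandwiches
  have hFm : ∀ y, Qn M W (n + j) ω y Set.univ = ∫⁻ z, G z ∂(Qn M W n ω y) := by
    intro y
    rw [Qn_add hMmeas hWmeas j n ω y,
      Measure.bind_apply MeasurableSet.univ (measurable_Qn hMmeas hWmeas j _).aemeasurable]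
  have hFm_pt : ∀ y, sG * Fn y ≤ Qn M W (n + j) ω y Set.univ ∧
      Qn M W (n + j) ω y Set.univ ≤ (sG + wG) * Fn y := by
    intro y
    rw [hFm y]
    exact hsG y
  -- denominator analysis
  have hmj : n + j = j + n := by omega
  have h2z : zit j (zitInv (j + n) ω) = zitInv n ω := zit_zitInv j n ω
  have hcomp : σ.bind (Qn M W (n + j) (zitInv (n + j) ω))
      = (σ.bind (Qn M W j (zitInv (n + j) ω))).bind (Qn M W n θn) := by
    rw [Measure.bind_bind (measurable_Qn hMmeas hWmeas _ _).aemeasurable (measurable_Qn hMmeas hWmeas _ _).aemeasurable]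
    have h3 : (Qn M W (n + j) (zitInv (n + j) ω))
        = fun y => (Qn M W j (zitInv (n + j) ω) y).bind (Qn M W n θn) := by
      funext y
      have h4 := Qn_add hMmeas hWmeas n j (zitInv (n + j) ω) y
      rw [hmj] at h4 ⊢
      rw [h4, h2z]
    rw [h3]
  set σ'' := σ.bind (Qn M W j (zitInv (n + j) ω)) with hσ''def
  set Nm := ∫⁻ y, Qn M W (n + j) ω y Set.univ ∂(σ.bind (Qn M W (n + j) (zitInv (n + j) ω)))
    with hNmdef
  set Ym := QnMass M W (n + j) (zitInv (n + j) ω) σ with hYmdef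
  have hYm := QnMass_prob hB2d (n + j) (zitInv (n + j) ω) σ hσ
  have hFmmeas : Measurable fun y => Qn M W (n + j) ω y Set.univ :=
    measurable_Qn_set hMmeas hWmeas _ ω MeasurableSet.univ
  have hNm_eq : Nm = ∫⁻ x', (∫⁻ y, Qn M W (n + j) ω y Set.univ ∂(Qn M W n θn x')) ∂σ'' := by
    rw [hNmdef, hcomp, Measure.lintegral_bind (measurable_Qn hMmeas hWmeas n θn).aemeasurable hFmmeas.aemeasurable]
  have hYm_eq : Ym = ∫⁻ x', Qn M W n θn x' Set.univ ∂σ'' := by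
    rw [hYmdef]
    unfold QnMass
    rw [hcomp, bind_Qn_apply hMmeas hWmeas n θn σ'' MeasurableSet.univ]
  -- inner pointwise bound
  have hinner : ∀ x', sG * s2 * Qn M W n θn x' Set.univ
      ≤ ∫⁻ y, Qn M W (n + j) ω y Set.univ ∂(Qn M W n θn x') ∧
      ∫⁻ y, Qn M W (n + j) ω y Set.univ ∂(Qn M W n θn x')
        ≤ (sG + wG) * (s2 + w2) * Qn M W n θn x' Set.univ := by
    intro x'
    constructor
    · calc sG * s2 * Qn M W n θn x' Set.univ
          = sG * (s2 * Qn M W n θn x' Set.univ) := by ring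
      _ ≤ sG * ∫⁻ y, Fn y ∂(Qn M W n θn x') := mul_le_mul_right (hs2 x').1 _
      _ = ∫⁻ y, sG * Fn y ∂(Qn M W n θn x') :=
          (lintegral_const_mul sG hFnmeas).symm
      _ ≤ _ := lintegral_mono fun y => (hFm_pt y).1
    · calc ∫⁻ y, Qn M W (n + j) ω y Set.univ ∂(Qn M W n θn x')
          ≤ ∫⁻ y, (sG + wG) * Fn y ∂(Qn M W n θn x') := lintegral_mono fun y => (hFm_pt y).2
      _ = (sG + wG) * ∫⁻ y, Fn y ∂(Qn M W n θn x') := lintegral_const_mul _ hFnmeas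
      _ ≤ (sG + wG) * ((s2 + w2) * Qn M W n θn x' Set.univ) :=
          mul_le_mul_right (hs2 x').2 _
      _ = (sG + wG) * (s2 + w2) * Qn M W n θn x' Set.univ := by ring
  have hNm_low : sG * s2 * Ym ≤ Nm := by
    rw [hNm_eq, hYm_eq, ← lintegral_const_mul _
      (measurable_Qn_set hMmeas hWmeas n θn MeasurableSet.univ)]
    exact lintegral_mono fun x' => (hinner x').1
  have hNm_high : Nm ≤ (sG + wG) * (s2 + w2) * Ym := by
    rw [hNm_eq, hYm_eq, ← lintegral_const_mul _
      (measurable_Qn_set hMmeas hWmeas n θn MeasurableSet.univ)]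
    exact lintegral_mono fun x' => (hinner x').2
  -- the denominator of ratioH
  have hden_eq : PhiFun M W (n + j) (zitInv (n + j) ω) σ
      (fun y => Qn M W (n + j) ω y Set.univ) = Nm / Ym := rfl
  have hden_low : sG * s2 ≤ Nm / Ym :=
    (ENNReal.le_div_iff_mul_le (Or.inl hYm.1.ne') (Or.inl hYm.2)).2 hNm_low
  have hden_high : Nm / Ym ≤ (sG + wG) * (s2 + w2) := ENNReal.div_le_of_le_mul hNm_high
  have hr_eq : ratioH M W σ (n + j) ω x
      = Qn M W (n + j) ω x Set.univ / (Nm / Ym) := rfl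
  constructor
  · -- lower bound
    rw [hr_eq]
    have hstep1 : Fn x / ((1 + D) * (s2 + w2))
        = (sG * Fn x) / (sG * ((1 + D) * (s2 + w2))) :=
      (ENNReal.mul_div_mul_left _ _ hsGpos.ne' hsGfin).symm
    have hstep2 : (sG + wG) * (s2 + w2) ≤ sG * ((1 + D) * (s2 + w2)) := by
      calc (sG + wG) * (s2 + w2) ≤ ((1 + D) * sG) * (s2 + w2) := mul_le_mul_left hsGwG _
      _ = sG * ((1 + D) * (s2 + w2)) := by ring
    calc Fn x / ((1 + D) * (s2 + w2)) = (sG * Fn x) / (sG * ((1 + D) * (s2 + w2))) := hstep1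
    _ ≤ (sG * Fn x) / ((sG + wG) * (s2 + w2)) := ENNReal.div_le_div_left hstep2 _
    _ ≤ Qn M W (n + j) ω x Set.univ / (Nm / Ym) :=
        ENNReal.div_le_div (hFm_pt x).1 hden_high
  · -- upper bound
    rw [hr_eq]
    have hstep3 : ((sG + wG) * Fn x) / (sG * s2) ≤ (1 + D) * (Fn x / s2) := by
      calc ((sG + wG) * Fn x) / (sG * s2) ≤ ((1 + D) * sG * Fn x) / (sG * s2) :=
            ENNReal.div_le_div (mul_le_mul_left hsGwG _) le_rfl
      _ = (sG * ((1 + D) * Fn x)) / (sG * s2) := by ring_nf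
      _ = ((1 + D) * Fn x) / s2 := ENNReal.mul_div_mul_left _ _ hsGpos.ne' hsGfin
      _ = (1 + D) * (Fn x / s2) := by rw [mul_div_assoc]
    calc Qn M W (n + j) ω x Set.univ / (Nm / Ym)
        ≤ ((sG + wG) * Fn x) / (sG * s2) := ENNReal.div_le_div (hFm_pt x).2 hden_low
    _ ≤ (1 + D) * (Fn x / s2) := hstep3
include hMprob hMmeas hWmeas hεm hεmp hB2b hB2c hB2d in
lemma ratioH_est (hΔ2 : 0 < Δ2) (n : ℕ) (hn : 1 ≤ n) (m : ℕ) (hm : n ≤ m) (ω : Env H) (x : E)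
    (σ1 σ2 : Measure E) (h1 : IsProbabilityMeasure σ1) (h2 : IsProbabilityMeasure σ2) :
    |(ratioH M W σ1 m ω x).toReal - (ratioH M W σ2 n ω x).toReal|
      ≤ 14 * (Δ2 / εm) * ((εp / εm) * (1 - εm / εp) ^ n) := by
  have hεp : (0:ℝ) < εp := lt_of_lt_of_le hεm hεmp
  have hρ0 : (0:ℝ) ≤ 1 - εm / εp := by
    rw [sub_nonneg]
    exact (div_le_one hεp).2 hεmp
  obtain ⟨L, U, hL, hU, hUL, hUabs, hmem⟩ :=
    ratioH_interval hMprob hMmeas hWmeas hεm hεmp hB2b hB2c hB2d hΔ2 n hn ω x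
  set d : ℝ := (εp / εm) * (1 - εm / εp) ^ n with hddef
  have hd0 : (0:ℝ) ≤ d := mul_nonneg (by positivity) (pow_nonneg hρ0 n)
  have hDval : ENNReal.ofReal (εp / εm) * (ENNReal.ofReal (1 - εm / εp)) ^ n
      = ENNReal.ofReal d := by
    rw [hddef, ← ENNReal.ofReal_pow hρ0, ← ENNReal.ofReal_mul (by positivity)]
  rw [hDval] at hUL hUabs
  have hra := hmem m hm σ1 h1
  have hrb := hmem n le_rfl σ2 h2
  have hafin : ratioH M W σ1 m ω x ≠ ∞ := (lt_of_le_of_lt hra.2 hU.lt_top).ne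
  have hbfin : ratioH M W σ2 n ω x ≠ ∞ := (lt_of_le_of_lt hrb.2 hU.lt_top).ne
  have hLfin : L ≠ ∞ := (lt_of_le_of_lt (hrb.1.trans hrb.2) hU.lt_top).ne
  set a := (ratioH M W σ1 m ω x).toReal with hadef
  set b := (ratioH M W σ2 n ω x).toReal with hbdef
  set l := L.toReal with hldef
  set u := U.toReal with hudef
  have hal : l ≤ a := ENNReal.toReal_mono hafin hra.1
  have hau : a ≤ u := ENNReal.toReal_mono hU hra.2
  have hbl : l ≤ b := ENNReal.toReal_mono hbfin hrb.1
  have hbu : b ≤ u := ENNReal.toReal_mono hU hrb.2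
  have hl0 : (0:ℝ) ≤ l := ENNReal.toReal_nonneg
  set R : ℝ := Δ2 / εm with hRdef
  have hR0 : (0:ℝ) ≤ R := by positivity
  have h1Dfin : (1 + ENNReal.ofReal d) ≠ ∞ := by simp
  have hul : u ≤ (1 + d) ^ 3 * l := by
    have h3 := ENNReal.toReal_mono
      (ENNReal.mul_ne_top (ENNReal.pow_ne_top h1Dfin) hLfin) hUL
    rwa [ENNReal.toReal_mul, ENNReal.toReal_pow, ENNReal.toReal_add one_ne_top
      ENNReal.ofReal_ne_top, ENNReal.toReal_one, ENNReal.toReal_ofReal hd0] at h3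
  have huabs : u ≤ R * (1 + d) := by
    have h3 := ENNReal.toReal_mono
      (ENNReal.mul_ne_top ENNReal.ofReal_ne_top h1Dfin) hUabs
    rwa [ENNReal.toReal_mul, ENNReal.toReal_add one_ne_top ENNReal.ofReal_ne_top,
      ENNReal.toReal_one, ENNReal.toReal_ofReal hd0, ENNReal.toReal_ofReal hR0] at h3
  have hgoal : u - l ≤ 14 * R * d ∧ u ≤ 14 * R * d + l := by
    rcases le_or_gt d 1 with hd1 | hd1
    · have h7 : (1 + d) ^ 3 ≤ 1 + 7 * d := by nlinarith [sq_nonneg d]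
      have hl2R : l ≤ 2 * R := by nlinarith
      have h8 : u ≤ (1 + 7 * d) * l := hul.trans (mul_le_mul_of_nonneg_right h7 hl0)
      have h9 : d * l ≤ d * (2 * R) := mul_le_mul_of_nonneg_left hl2R hd0
      constructor <;> nlinarith
    · constructor <;> nlinarith
  rw [abs_sub_le_iff]
  constructor
  · calc a - b ≤ u - l := by linarith
    _ ≤ 14 * R * d := hgoal.1
    _ = 14 * (Δ2 / εm) * ((εp / εm) * (1 - εm / εp) ^ n) := by rw [hRdef, hddef]
  · calc b - a ≤ u - l := by linarith
    _ ≤ 14 * R * d := hgoal.1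
    _ = 14 * (Δ2 / εm) * ((εp / εm) * (1 - εm / εp) ^ n) := by rw [hRdef, hddef]

/-- The candidate limit `h(ω,x)`, defined with the reference measure `ν`. -/
def hFun (M : Env H → E → Measure E) (W : Env H → E → ℝ) (ν : Measure E)
    (ω : Env H) (x : E) : ℝ :=
  Filter.limsup (fun n => (ratioH M W ν n ω x).toReal) atTop

include hMprob hMmeas hWmeas hεm hεmp hB2b hB2c hB2d in
lemma hFun_est (hΔ2 : 0 < Δ2) (ω : Env H) (x : E) (n : ℕ) (hn : 1 ≤ n)
    (σ : Measure E) (hσ : IsProbabilityMeasure σ) :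
    |(ratioH M W σ n ω x).toReal - hFun M W ν ω x|
      ≤ 2 * (14 * (Δ2 / εm) * (εp / εm)) * (1 - εm / εp) ^ n := by
  set Ch : ℝ := 14 * (Δ2 / εm) * (εp / εm) with hChdef
  set r : ℝ := 1 - εm / εp with hrdef
  have hkey : ∀ m, n ≤ m → ∀ τ : Measure E, IsProbabilityMeasure τ →
      |(ratioH M W τ m ω x).toReal - (ratioH M W ν n ω x).toReal| ≤ Ch * r ^ n := by
    intro m hm τ hτ
    have h3 := ratioH_est hMprob hMmeas hWmeas hεm hεmp hB2b hB2c hB2d hΔ2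
      n hn m hm ω x τ ν hτ inferInstance
    calc |(ratioH M W τ m ω x).toReal - (ratioH M W ν n ω x).toReal|
        ≤ 14 * (Δ2 / εm) * ((εp / εm) * (1 - εm / εp) ^ n) := h3
    _ = Ch * r ^ n := by rw [hChdef, hrdef]; ring
  set b := (ratioH M W ν n ω x).toReal with hbdef
  have hbdd : IsBoundedUnder (· ≤ ·) atTop (fun m => (ratioH M W ν m ω x).toReal) := by
    refine ⟨b + Ch * r ^ n, eventually_atTop.2 ⟨n, fun m hm => ?_⟩⟩
    have h4 := hkey m hm ν inferInstance
    have h5 := abs_le.1 h4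
    show (ratioH M W ν m ω x).toReal ≤ b + Ch * r ^ n
    linarith [h5.2]
  have hcob : IsCoboundedUnder (· ≤ ·) atTop (fun m => (ratioH M W ν m ω x).toReal) :=
    isCoboundedUnder_le_of_le atTop fun m => ENNReal.toReal_nonneg
  have hup : hFun M W ν ω x ≤ b + Ch * r ^ n := by
    refine Filter.limsup_le_of_le hcob ?_
    refine eventually_atTop.2 ⟨n, fun m hm => ?_⟩
    have h5 := abs_le.1 (hkey m hm ν inferInstance)
    linarith [h5.2]
  have hlow : b - Ch * r ^ n ≤ hFun M W ν ω x := by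
    refine le_limsup_of_frequently_le ?_ hbdd
    refine (eventually_atTop.2 ⟨n, fun m hm => ?_⟩).frequently
    have h5 := abs_le.1 (hkey m hm ν inferInstance)
    linarith [h5.1]
  have hσn := abs_le.1 (hkey n le_rfl σ hσ)
  rw [abs_sub_le_iff]
  constructor <;> [skip; skip] <;> [linarith [hσn.1, hσn.2]; linarith [hσn.1, hσn.2]]

include hMprob hMmeas hWmeas hεm hεmp hB2b hB2c hB2d in
lemma hFun_tendsto (hΔ2 : 0 < Δ2) (ω : Env H) (x : E)
    (σ : Measure E) (hσ : IsProbabilityMeasure σ) :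
    Tendsto (fun n => (ratioH M W σ n ω x).toReal) atTop (𝓝 (hFun M W ν ω x)) := by
  have hεp : (0:ℝ) < εp := lt_of_lt_of_le hεm hεmp
  have hρ0 : (0:ℝ) ≤ 1 - εm / εp := by
    rw [sub_nonneg]; exact (div_le_one hεp).2 hεmp
  have hρ1 : (1 - εm / εp : ℝ) < 1 := by
    have : 0 < εm / εp := by positivity
    linarith
  rw [tendsto_iff_dist_tendsto_zero]
  have h0 : Tendsto (fun n : ℕ => 2 * (14 * (Δ2 / εm) * (εp / εm)) * (1 - εm / εp) ^ n)
      atTop (𝓝 0) := by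
    have h1 := (tendsto_pow_atTop_nhds_zero_of_lt_one hρ0 hρ1).const_mul
      (2 * (14 * (Δ2 / εm) * (εp / εm)))
    simpa using h1
  refine squeeze_zero' ?_ ?_ h0
  · exact Eventually.of_forall fun n => dist_nonneg
  · refine eventually_atTop.2 ⟨1, fun n hn => ?_⟩
    rw [Real.dist_eq]
    exact hFun_est hMprob hMmeas hWmeas hεm hεmp hB2b hB2c hB2d hΔ2 ω x n hn σ hσ
lemma PhiMeas_apply (n : ℕ) (θ : Env H) (σ : Measure E) (A : Set E) :
    PhiMeas M W n θ σ A = PhiSet M W n θ σ A := by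
  unfold PhiMeas PhiSet
  rw [Measure.smul_apply, smul_eq_mul, ENNReal.div_eq_inv_mul]

include hB2d in
lemma PhiMeas_prob (n : ℕ) (θ : Env H) (σ : Measure E) (hσ : IsProbabilityMeasure σ) :
    IsProbabilityMeasure (PhiMeas M W n θ σ) := by
  constructor
  rw [PhiMeas_apply]
  have h2 := QnMass_prob hB2d n θ σ hσ
  exact ENNReal.div_self h2.1.ne' h2.2

lemma integral_close (μ η : Measure E) (hμ : IsProbabilityMeasure μ)
    (hη : IsProbabilityMeasure η) (δ : ℝ≥0∞) (hδ : δ ≠ ∞)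
    (hset : ∀ A : Set E, MeasurableSet A → μ A ≤ η A + δ ∧ η A ≤ μ A + δ)
    (φ : E → ℝ) (hφ : Measurable φ) (B : ℝ) (hB : ∀ x, |φ x| ≤ B) :
    |(∫ y, φ y ∂μ) - ∫ y, φ y ∂η| ≤ 2 * B * δ.toReal := by
  have hne : Nonempty E := by
    by_contra h
    rw [not_nonempty_iff] at h
    have h1 : μ Set.univ = 1 := measure_univ
    rw [Set.univ_eq_empty_iff.2 h, measure_empty] at h1
    exact zero_ne_one h1
  have hB0 : (0:ℝ) ≤ B := hne.elim fun x => (abs_nonneg (φ x)).trans (hB x)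
  set f : E → ℝ := fun y => φ y + B with hfdef
  have hfmeas : Measurable f := hφ.add measurable_const
  have hf0 : ∀ y, 0 ≤ f y := fun y => by
    have := abs_le.1 (hB y)
    simp only [hfdef]
    linarith [this.1]
  have hf2B : ∀ y, f y ≤ 2 * B := fun y => by
    have := abs_le.1 (hB y)
    simp only [hfdef]
    linarith [this.2]
  have hint : ∀ (κ : Measure E), IsProbabilityMeasure κ → Integrable φ κ := by
    intro κ hκ
    refine ⟨hφ.aestronglyMeasurable, ?_⟩
    exact MeasureTheory.HasFiniteIntegral.of_bounded (C := B) (Eventually.of_forall hB)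
  -- lintegral identities
  have hL : ∀ (κ : Measure E), IsProbabilityMeasure κ →
      (∫ y, φ y ∂κ) = (∫⁻ y, ENNReal.ofReal (f y) ∂κ).toReal - B := by
    intro κ hκ
    have h1 : ∫ y, f y ∂κ = (∫⁻ y, ENNReal.ofReal (f y) ∂κ).toReal :=
      integral_eq_lintegral_of_nonneg_ae (Eventually.of_forall hf0)
        hfmeas.aestronglyMeasurable
    have h2 : ∫ y, f y ∂κ = (∫ y, φ y ∂κ) + B := by
      rw [hfdef]
      rw [integral_add (hint κ hκ) (integrable_const B), integral_const]
      simp [measure_univ]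
    rw [h2] at h1
    linarith [h1]
  -- layer cake
  have hlay : ∀ (κ : Measure E), ∫⁻ y, ENNReal.ofReal (f y) ∂κ
      = ∫⁻ t in Set.Ioi (0:ℝ), κ {a | t < f a} :=
    fun κ => MeasureTheory.lintegral_eq_lintegral_meas_lt κ (Eventually.of_forall hf0)
      hfmeas.aemeasurable
  have hSmeas : ∀ t : ℝ, MeasurableSet {a | t < f a} := fun t =>
    measurableSet_lt measurable_const hfmeas
  have hmono : ∀ (κ1 κ2 : Measure E), (∀ A, MeasurableSet A → κ1 A ≤ κ2 A + δ) →
      ∫⁻ t in Set.Ioi (0:ℝ), κ1 {a | t < f a}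
        ≤ (∫⁻ t in Set.Ioi (0:ℝ), κ2 {a | t < f a}) + δ * ENNReal.ofReal (2 * B) := by
    intro κ1 κ2 hk
    have hind : ∫⁻ t in Set.Ioi (0:ℝ),
        (Set.Ioo (0:ℝ) (2 * B)).indicator (fun _ => δ) t = δ * ENNReal.ofReal (2 * B) := by
      rw [lintegral_indicator measurableSet_Ioo, Measure.restrict_restrict measurableSet_Ioo]
      have h3 : Set.Ioo (0:ℝ) (2 * B) ∩ Set.Ioi 0 = Set.Ioo (0:ℝ) (2 * B) := by
        ext t
        simp only [Set.mem_inter_iff, Set.mem_Ioo, Set.mem_Ioi, and_iff_left_iff_imp]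
        exact fun ht => ht.1
      rw [h3, lintegral_const, Measure.restrict_apply MeasurableSet.univ, Set.univ_inter,
        Real.volume_Ioo]
      simp
    calc ∫⁻ t in Set.Ioi (0:ℝ), κ1 {a | t < f a}
        ≤ ∫⁻ t in Set.Ioi (0:ℝ),
            (κ2 {a | t < f a} + (Set.Ioo (0:ℝ) (2 * B)).indicator (fun _ => δ) t) := by
          refine lintegral_mono_ae ((ae_restrict_iff' measurableSet_Ioi).2
            (Eventually.of_forall fun t ht => ?_))
          rcases lt_or_ge t (2 * B) with h4 | h4
          · have h5 : (Set.Ioo (0:ℝ) (2 * B)).indicator (fun _ => δ) t = δ := by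
              rw [Set.indicator_of_mem]
              exact ⟨ht, h4⟩
            rw [h5]
            exact (hk _ (hSmeas t)).trans (add_le_add_left le_rfl δ)
          · have h6 : {a | t < f a} = (∅ : Set E) := by
              ext a
              simp only [Set.mem_setOf_eq, Set.mem_empty_iff_false, iff_false, not_lt]
              exact (hf2B a).trans h4
            rw [h6]
            simp
    _ = (∫⁻ t in Set.Ioi (0:ℝ), κ2 {a | t < f a}) + δ * ENNReal.ofReal (2 * B) := by
          rw [lintegral_add_right _ (measurable_const.indicator measurableSet_Ioo), hind]
  have hfin : ∀ (κ : Measure E), IsProbabilityMeasure κ →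
      ∫⁻ y, ENNReal.ofReal (f y) ∂κ ≤ ENNReal.ofReal (2 * B) := by
    intro κ hκ
    calc ∫⁻ y, ENNReal.ofReal (f y) ∂κ ≤ ∫⁻ _, ENNReal.ofReal (2 * B) ∂κ :=
          lintegral_mono fun y => ENNReal.ofReal_le_ofReal (hf2B y)
    _ = ENNReal.ofReal (2 * B) := by simp [measure_univ]
  set Lμ := ∫⁻ y, ENNReal.ofReal (f y) ∂μ with hLμdef
  set Lη := ∫⁻ y, ENNReal.ofReal (f y) ∂η with hLηdef
  have hμη : Lμ ≤ Lη + δ * ENNReal.ofReal (2 * B) := by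
    rw [hLμdef, hLηdef, hlay μ, hlay η]
    exact hmono μ η fun A hA => (hset A hA).1
  have hημ : Lη ≤ Lμ + δ * ENNReal.ofReal (2 * B) := by
    rw [hLμdef, hLηdef, hlay μ, hlay η]
    exact hmono η μ fun A hA => (hset A hA).2
  have hLμfin : Lμ ≠ ∞ := ((hfin μ hμ).trans_lt ENNReal.ofReal_lt_top).ne
  have hLηfin : Lη ≠ ∞ := ((hfin η hη).trans_lt ENNReal.ofReal_lt_top).ne
  have hδBfin : δ * ENNReal.ofReal (2 * B) ≠ ∞ := ENNReal.mul_ne_top hδ ENNReal.ofReal_ne_top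
  have htR : (δ * ENNReal.ofReal (2 * B)).toReal = 2 * B * δ.toReal := by
    rw [ENNReal.toReal_mul, ENNReal.toReal_ofReal (by linarith)]
    ring
  have h7 : Lμ.toReal ≤ Lη.toReal + 2 * B * δ.toReal := by
    have := ENNReal.toReal_mono (ENNReal.add_ne_top.2 ⟨hLηfin, hδBfin⟩) hμη
    rwa [ENNReal.toReal_add hLηfin hδBfin, htR] at this
  have h8 : Lη.toReal ≤ Lμ.toReal + 2 * B * δ.toReal := by
    have := ENNReal.toReal_mono (ENNReal.add_ne_top.2 ⟨hLμfin, hδBfin⟩) hημ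
    rwa [ENNReal.toReal_add hLμfin hδBfin, htR] at this
  rw [hL μ hμ, hL η hη, abs_sub_le_iff]
  constructor <;> [linarith; linarith]

end Aux

/-- **Proposition 2, part 2.** Assuming (B2), the limits `η^ω` and `h(ω,x)` do not
depend on the choice of the probability measure `σ`, and the convergence holds at a
geometric rate `C·ρ^n`, uniformly in `ω`, `x` and `σ`. -/
theorem proposition2_part2
    (M : Env H → E → Measure E) (W : Env H → E → ℝ)
    (hMprob : ∀ ω x, IsProbabilityMeasure (M ω x))
    (hMmeas : Measurable fun p : Env H × E => M p.1 p.2)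
    (hWmeas : Measurable fun p : Env H × E => W p.1 p.2)
    (hWnn : ∀ ω x, 0 ≤ W ω x) (CW : ℝ) (hWbdd : ∀ ω x, W ω x ≤ CW)
    -- (B2)
    (Δ1 : ℝ) (hΔ1 : 0 < Δ1)
    (hB2a : ∀ ω x u, ∫⁻ y, ENNReal.ofReal (W (shift ω) y) ∂(M ω x)
        ≤ ENNReal.ofReal Δ1 * ∫⁻ y, ENNReal.ofReal (W (shift ω) y) ∂(M ω u))
    (εm εp : ℝ) (hεm : 0 < εm) (hεmp : εm ≤ εp)
    (ν : Measure E) [IsProbabilityMeasure ν]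
    (hB2b : ∀ ω x, ∀ A : Set E, MeasurableSet A →
        ENNReal.ofReal εm * ν A ≤ M ω x A ∧ M ω x A ≤ ENNReal.ofReal εp * ν A)
    (Δ2 : ℝ) (hΔ2 : 0 < Δ2)
    (hB2c : ∀ n : ℕ, 1 ≤ n → ∀ ω, ∀ σ₁ σ₂ : Measure E,
        IsProbabilityMeasure σ₁ → IsProbabilityMeasure σ₂ →
        QnMass M W n ω σ₁ ≤ ENNReal.ofReal Δ2 * QnMass M W n ω σ₂)
    (hB2d : ∀ n : ℕ, 1 ≤ n → ∀ ω, ∀ σ : Measure E, IsProbabilityMeasure σ →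
        0 < QnMass M W n ω σ ∧ QnMass M W n ω σ < ∞) :
    ∃ η : Env H → Measure E, ∃ h : Env H → E → ℝ,
      (∀ ω, IsProbabilityMeasure (η ω)) ∧
      -- the limits hold for every probability measure σ (independence of σ)
      (∀ σ : Measure E, IsProbabilityMeasure σ → ∀ ω,
        (∀ A : Set E, MeasurableSet A →
          Tendsto (fun n : ℕ => PhiSet M W n (zitInv n ω) σ A) atTop (𝓝 (η ω A))) ∧
        (∀ x, Tendsto (fun n : ℕ => (ratioH M W σ n ω x).toReal)
          atTop (𝓝 (h ω x)))) ∧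
      -- geometric rates, uniform in ω, x and σ
      ∃ C ρ : ℝ, ρ < 1 ∧
        (∀ n : ℕ, 1 ≤ n → ∀ φ : E → ℝ, Measurable φ → ∀ B : ℝ, (∀ x, |φ x| ≤ B) →
          ∀ ω, ∀ σ : Measure E, IsProbabilityMeasure σ →
            |(∫ y, φ y ∂(PhiMeas M W n (zitInv n ω) σ)) - ∫ y, φ y ∂(η ω)|
              ≤ C * ρ ^ n * B) ∧
        (∀ n : ℕ, 1 ≤ n → ∀ ω, ∀ x : E, ∀ σ : Measure E, IsProbabilityMeasure σ →
            |(ratioH M W σ n ω x).toReal - h ω x| ≤ C * ρ ^ n) := by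
  have hεp : (0:ℝ) < εp := lt_of_lt_of_le hεm hεmp
  have hρ0 : (0:ℝ) ≤ 1 - εm / εp := by
    rw [sub_nonneg]
    exact (div_le_one hεp).2 hεmp
  have hρ1 : (1 - εm / εp : ℝ) < 1 := by
    have : 0 < εm / εp := by positivity
    linarith
  have hne : Nonempty E := by
    by_contra h
    rw [not_nonempty_iff] at h
    have h1 : ν Set.univ = 1 := measure_univ
    rw [Set.univ_eq_empty_iff.2 h, measure_empty] at h1
    exact zero_ne_one h1
  obtain ⟨η, hηprob, hηeq⟩ := eta_exists hMprob hMmeas hWmeas hεm hεmp hB2b hB2d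
  refine ⟨η, hFun M W ν, hηprob, ?_, ?_⟩
  · intro σ hσ ω
    refine ⟨fun A hA => ?_, fun x => ?_⟩
    · rw [hηeq ω A hA]
      exact etaSet_tendsto hMprob hMmeas hWmeas hεm hεmp hB2b hB2d ω hA σ hσ
    · exact hFun_tendsto hMprob hMmeas hWmeas hεm hεmp hB2b hB2c hB2d hΔ2 ω x σ hσ
  · refine ⟨2 + 2 * (14 * (Δ2 / εm) * (εp / εm)), 1 - εm / εp, hρ1, ?_, ?_⟩
    · intro n hn φ hφ B hB ω σ hσ
      have hB0 : (0:ℝ) ≤ B := hne.elim fun x => (abs_nonneg (φ x)).trans (hB x)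
      have hρn0 : (0:ℝ) ≤ (1 - εm / εp) ^ n := pow_nonneg hρ0 n
      have hsets : ∀ A : Set E, MeasurableSet A →
          (PhiMeas M W n (zitInv n ω) σ) A ≤ η ω A + (ENNReal.ofReal (1 - εm / εp)) ^ n ∧
          η ω A ≤ (PhiMeas M W n (zitInv n ω) σ) A + (ENNReal.ofReal (1 - εm / εp)) ^ n := by
        intro A hA
        have hb := etaSet_bounds hMprob hMmeas hWmeas hεm hεmp hB2b hB2d ω n hA σ hσ
        rw [PhiMeas_apply, hηeq ω A hA]
        exact ⟨hb.2, hb.1⟩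
      have hest := integral_close (PhiMeas M W n (zitInv n ω) σ) (η ω)
        (PhiMeas_prob hB2d n (zitInv n ω) σ hσ) (hηprob ω)
        ((ENNReal.ofReal (1 - εm / εp)) ^ n) (ENNReal.pow_ne_top ENNReal.ofReal_ne_top)
        hsets φ hφ B hB
      have htr : ((ENNReal.ofReal (1 - εm / εp)) ^ n).toReal = (1 - εm / εp) ^ n := by
        rw [ENNReal.toReal_pow, ENNReal.toReal_ofReal hρ0]
      rw [htr] at hest
      have hCh0 : (0:ℝ) ≤ 14 * (Δ2 / εm) * (εp / εm) := by positivity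
      have hC : 2 * B * (1 - εm / εp) ^ n
          ≤ (2 + 2 * (14 * (Δ2 / εm) * (εp / εm))) * (1 - εm / εp) ^ n * B := by
        nlinarith [mul_nonneg (mul_nonneg hCh0 hρn0) hB0]
      exact hest.trans hC
    · intro n hn ω x σ hσ
      have hest := hFun_est hMprob hMmeas hWmeas hεm hεmp hB2b hB2c hB2d hΔ2 ω x n hn σ hσ
      have hρn0 : (0:ℝ) ≤ (1 - εm / εp) ^ n := pow_nonneg hρ0 n
      have hCh0 : (0:ℝ) ≤ 14 * (Δ2 / εm) * (εp / εm) := by positivity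
      calc |(ratioH M W σ n ω x).toReal - hFun M W ν ω x|
          ≤ 2 * (14 * (Δ2 / εm) * (εp / εm)) * (1 - εm / εp) ^ n := hest
      _ ≤ (2 + 2 * (14 * (Δ2 / εm) * (εp / εm))) * (1 - εm / εp) ^ n := by
        nlinarith [mul_nonneg hCh0 hρn0, hρn0]

end
end

section
/- Fix integers m₁, m₂ ≥ 1. Assume (B2), and assume there is Δ3 ∈ (0,∞) such that 𝐖^{m₁}(ω,x)/𝐖^{m₁}(ω',x') ≤ Δ3 for all admissible (ω,x), (ω',x') ∈ Ω×E^{m₁}. Let M̃ be any member of the class 𝕄^{m₁,m₂}, with constants ε̃_-, ε̃_+ and reference measure ν̃, and let J(ω,x) be the total mass of the associated kernel R(ω,x,·). Then J(ω,x)/J(ω',x') ≤ α for all admissible (ω,x),(ω',x'), where α = ( (Δ3)³·(ε̃_+/ε̃_-)·(ε_+^{m₂}/ε_-^{m₂}) )² · (ε̃_+/ε̃_-). -/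
open MeasureTheory ENNReal Filter Topology

noncomputable section

variable {H E : Type*} [MeasurableSpace H] [MeasurableSpace E]

/-- Admissibility of a particle configuration: positive total weight. -/
def Adm (W : Env H → E → ℝ) (ω : Env H) {m : ℕ} (x : Fin m → E) : Prop :=
  0 < ∑ j, W ω (x j)

/-- The average weight `𝐖^m(ω,x) = (1/m) Σ_j W(ω,x^j)`. -/
def Wavg (W : Env H → E → ℝ) (ω : Env H) {m : ℕ} (x : Fin m → E) : ℝ :=
  (∑ j, W ω (x j)) / m

/-- The weighted mixture `Σ_j W(ω,x^j) M^ω(x^j,·) / Σ_j W(ω,x^j)`. -/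
def mixK (M : Env H → E → Measure E) (W : Env H → E → ℝ) (ω : Env H)
    {m : ℕ} (x : Fin m → E) : Measure E :=
  (ENNReal.ofReal (∑ j, W ω (x j)))⁻¹ •
    ∑ j, ENNReal.ofReal (W ω (x j)) • M ω (x j)

/-- The particle transition kernel `𝐌^{m₁,m₂}(ω,x,·)`, the `m₂`-fold product of
the weighted mixture. -/
def Mpart (M : Env H → E → Measure E) (W : Env H → E → ℝ) (m₂ : ℕ) (ω : Env H)
    {m₁ : ℕ} (x : Fin m₁ → E) : Measure (Fin m₂ → E) :=
  Measure.pi fun _ => mixK M W ω x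

/-- The additive average `𝐡^m(ω,x) = (1/m) Σ_j h(ω,x^j)`. -/
def havg (h : Env H → E → ℝ) (ω : Env H) {m : ℕ} (x : Fin m → E) : ℝ :=
  (∑ j, h ω (x j)) / m

/-- The kernel `R(ω,x,dx') = 𝐖^{m₁}(ω,x)²·φ^ω(x,x')²·M̃(ω,x,dx')`, where
`φ^ω(x,·)` is the Radon–Nikodym derivative of `𝐌^{m₁,m₂}(ω,x,·)` with respect to
`M̃(ω,x,·)`. -/
def Rker (M : Env H → E → Measure E) (W : Env H → E → ℝ) (m₁ m₂ : ℕ)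
    (Mt : Env H → (Fin m₁ → E) → Measure (Fin m₂ → E))
    (ω : Env H) (x : Fin m₁ → E) : Measure (Fin m₂ → E) :=
  (Mt ω x).withDensity fun x' =>
    (ENNReal.ofReal (Wavg W ω x)) ^ 2 *
      ((Mpart M W m₂ ω x).rnDeriv (Mt ω x) x') ^ 2

/-- `J(ω,x) = R(ω,x,E^{m₂})`, the total mass of `R(ω,x,·)`. -/
def Jmass (M : Env H → E → Measure E) (W : Env H → E → ℝ) (m₁ m₂ : ℕ)
    (Mt : Env H → (Fin m₁ → E) → Measure (Fin m₂ → E))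
    (ω : Env H) (x : Fin m₁ → E) : ℝ≥0∞ :=
  Rker M W m₁ m₂ Mt ω x Set.univ

section AuxJ

lemma auxJ_isFiniteMeasure_smul {α : Type*} [MeasurableSpace α] (c : ℝ≥0∞) (hc : c ≠ ∞)
    (μ : Measure α) [IsFiniteMeasure μ] : IsFiniteMeasure (c • μ) :=
  ⟨by rw [Measure.smul_apply, smul_eq_mul]
      exact ENNReal.mul_lt_top hc.lt_top (measure_lt_top μ _)⟩

lemma auxJ_rnDeriv_mono {α : Type*} [MeasurableSpace α] {μ₁ μ₂ ν : Measure α}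
    [IsFiniteMeasure μ₁] [IsFiniteMeasure μ₂] [IsFiniteMeasure ν]
    (h12 : μ₁ ≤ μ₂) (h1 : μ₁ ≪ ν) (h2 : μ₂ ≪ ν) :
    μ₁.rnDeriv ν ≤ᵐ[ν] μ₂.rnDeriv ν := by
  refine ae_le_of_forall_setLIntegral_le_of_sigmaFinite
    (Measure.measurable_rnDeriv _ _) fun s hs _ => ?_
  rw [Measure.setLIntegral_rnDeriv h1, Measure.setLIntegral_rnDeriv h2]
  exact Measure.le_iff'.1 h12 s

lemma auxJ_pi_le_pi {ι : Type*} [Fintype ι] {β : ι → Type*} [∀ i, MeasurableSpace (β i)]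
    {μ ν : ∀ i, Measure (β i)} (h : ∀ i, μ i ≤ ν i) :
    Measure.pi μ ≤ Measure.pi ν := by
  refine Measure.le_iff.2 fun s hs => ?_
  rw [Measure.pi, Measure.pi, toMeasure_apply _ _ hs, toMeasure_apply _ _ hs]
  have key : (OuterMeasure.pi fun i => (μ i).toOuterMeasure)
      ≤ OuterMeasure.pi fun i => (ν i).toOuterMeasure := by
    rw [OuterMeasure.pi]
    refine OuterMeasure.le_boundedBy.2 fun t => ?_
    refine le_trans (OuterMeasure.boundedBy_le (m := piPremeasure
      fun i => (μ i).toOuterMeasure) t) ?_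
    refine Finset.prod_le_prod' fun i _ => ?_
    exact Measure.le_iff'.1 (h i) _
  exact key s

lemma auxJ_pi_smul {β : Type*} [MeasurableSpace β] (c : ℝ≥0∞) (hc : c ≠ ∞)
    (ν : Measure β) [IsFiniteMeasure ν] (m : ℕ) :
    (Measure.pi fun _ : Fin m => c • ν) = c ^ m • Measure.pi fun _ : Fin m => ν := by
  haveI : IsFiniteMeasure (c • ν) := auxJ_isFiniteMeasure_smul c hc ν
  refine Measure.pi_eq fun s hs => ?_
  rw [Measure.smul_apply, smul_eq_mul, Measure.pi_pi]
  simp only [Measure.smul_apply, smul_eq_mul]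
  rw [Finset.prod_mul_distrib, Finset.prod_const, Finset.card_univ, Fintype.card_fin]

lemma auxJ_scalar (Δ3 εm εp etm etp Wa Wb : ℝ) (m₂ : ℕ)
    (hΔ1 : 1 ≤ Δ3) (hεm : 0 < εm) (hεmp : εm ≤ εp) (hetm : 0 < etm) (hetmp : etm ≤ etp)
    (hWb : 0 < Wb) (hWa : 0 ≤ Wa) (hW : Wa ≤ Δ3 * Wb) :
    Wa ^ 2 * (etm⁻¹ * (εp ^ m₂) ^ 2) ≤
      ((Δ3 ^ 3 * (etp / etm) * (εp ^ m₂ / εm ^ m₂)) ^ 2 * (etp / etm)) *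
        (Wb ^ 2 * (etp⁻¹ * (εm ^ m₂) ^ 2)) := by
  set P := εp ^ m₂ with hP
  set Q := εm ^ m₂ with hQdef
  have hQ : 0 < Q := pow_pos hεm m₂
  have hP0 : 0 < P := lt_of_lt_of_le hQ (pow_le_pow_left₀ hεm.le hεmp m₂)
  have hetp : 0 < etp := lt_of_lt_of_le hetm hetmp
  have hRHS : ((Δ3 ^ 3 * (etp / etm) * (P / Q)) ^ 2 * (etp / etm)) *
      (Wb ^ 2 * (etp⁻¹ * Q ^ 2)) = Δ3 ^ 6 * (etp ^ 2 / etm ^ 3) * P ^ 2 * Wb ^ 2 := by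
    field_simp
  rw [hRHS]
  have h1 : Wa ^ 2 ≤ Δ3 ^ 2 * Wb ^ 2 := by nlinarith
  have h2 : (Δ3:ℝ) ^ 2 ≤ Δ3 ^ 6 := pow_le_pow_right₀ hΔ1 (by norm_num)
  have h3 : etm⁻¹ ≤ etp ^ 2 / etm ^ 3 := by
    rw [le_div_iff₀ (by positivity)]
    have he : etm⁻¹ * etm ^ 3 = etm ^ 2 := by field_simp
    rw [he]
    exact pow_le_pow_left₀ hetm.le hetmp 2
  calc Wa ^ 2 * (etm⁻¹ * P ^ 2) ≤ (Δ3 ^ 2 * Wb ^ 2) * (etm⁻¹ * P ^ 2) := by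
        apply mul_le_mul_of_nonneg_right h1 (by positivity)
    _ = Δ3 ^ 2 * etm⁻¹ * P ^ 2 * Wb ^ 2 := by ring
    _ ≤ Δ3 ^ 6 * (etp ^ 2 / etm ^ 3) * P ^ 2 * Wb ^ 2 := by
        apply mul_le_mul_of_nonneg_right _ (by positivity)
        apply mul_le_mul_of_nonneg_right _ (by positivity)
        exact mul_le_mul h2 h3 (by positivity) (by positivity)

end AuxJ

/-- **Lemma 2 (J-ratio bound).** Fix `m₁, m₂ ≥ 1`, assume (B2) and a uniform bound
`Δ3` on ratios of average weights. For any member `M̃` of the class `𝕄^{m₁,m₂}`,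
the ratio `J(ω,x)/J(ω',x')` is bounded by
`α = ((Δ3)³·(ε̃₊/ε̃₋)·(ε₊^{m₂}/ε₋^{m₂}))²·(ε̃₊/ε̃₋)`. -/


theorem lemma2_J_ratio
    (M : Env H → E → Measure E) (W : Env H → E → ℝ)
    (hMprob : ∀ ω x, IsProbabilityMeasure (M ω x))
    (hMmeas : Measurable fun p : Env H × E => M p.1 p.2)
    (hWmeas : Measurable fun p : Env H × E => W p.1 p.2)
    (hWnn : ∀ ω x, 0 ≤ W ω x)
    (m₁ m₂ : ℕ) (hm₁ : 1 ≤ m₁) (hm₂ : 1 ≤ m₂)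
    -- (B2), minorisation/majorisation part
    (εm εp : ℝ) (hεm : 0 < εm) (hεmp : εm ≤ εp)
    (ν : Measure E) [IsProbabilityMeasure ν]
    (hB2b : ∀ ω x, ∀ A : Set E, MeasurableSet A →
        ENNReal.ofReal εm * ν A ≤ M ω x A ∧ M ω x A ≤ ENNReal.ofReal εp * ν A)
    -- uniform bound on ratios of average weights over admissible configurations
    (Δ3 : ℝ) (hΔ3 : 0 < Δ3)
    (hWr : ∀ ω ω' : Env H, ∀ x x' : Fin m₁ → E, Adm W ω x → Adm W ω' x' →
        Wavg W ω x / Wavg W ω' x' ≤ Δ3)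
    -- M̃: a member of the class 𝕄^{m₁,m₂}, with its constants and reference measure
    (Mt : Env H → (Fin m₁ → E) → Measure (Fin m₂ → E))
    (hMtmeas : ∀ ω, Measurable (Mt ω))
    (hMtprob : ∀ ω x, IsProbabilityMeasure (Mt ω x))
    (etm etp : ℝ) (hetm : 0 < etm) (hetmp : etm ≤ etp)
    (νt : Measure (Fin m₂ → E)) [IsProbabilityMeasure νt]
    (hMtbd : ∀ ω, ∀ x : Fin m₁ → E, Adm W ω x →
        ∀ D : Set (Fin m₂ → E), MeasurableSet D →
          ENNReal.ofReal etm * νt D ≤ Mt ω x D ∧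
          Mt ω x D ≤ ENNReal.ofReal etp * νt D)
    (hac : (Measure.pi fun _ : Fin m₂ => ν) ≪ νt)
    (hL2 : ∫⁻ x', ((Measure.pi fun _ : Fin m₂ => ν).rnDeriv νt x') ^ 2 ∂νt < ∞) :
    ∀ ω ω' : Env H, ∀ x x' : Fin m₁ → E, Adm W ω x → Adm W ω' x' →
      Jmass M W m₁ m₂ Mt ω x / Jmass M W m₁ m₂ Mt ω' x'
        ≤ ENNReal.ofReal
            ((Δ3 ^ 3 * (etp / etm) * (εp ^ m₂ / εm ^ m₂)) ^ 2 * (etp / etm)) := by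
  have hεp : (0:ℝ) < εp := lt_of_lt_of_le hεm hεmp
  have hetp : (0:ℝ) < etp := lt_of_lt_of_le hetm hetmp
  -- notation
  set piν : Measure (Fin m₂ → E) := Measure.pi fun _ : Fin m₂ => ν with hpiν
  set g : (Fin m₂ → E) → ℝ≥0∞ := piν.rnDeriv νt with hg
  set L : ℝ≥0∞ := ∫⁻ x', g x' ^ 2 ∂νt with hLdef
  have hgmeas : Measurable g := Measure.measurable_rnDeriv _ _
  have hLtop : L ≠ ∞ := hL2.ne
  have hL0 : L ≠ 0 := by
    intro h0
    have hgz : (fun x' => g x' ^ 2) =ᵐ[νt] 0 :=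
      (lintegral_eq_zero_iff (hgmeas.pow_const 2)).1 h0
    have hg0 : g =ᵐ[νt] 0 := by
      filter_upwards [hgz] with y hy
      simpa [pow_eq_zero_iff] using hy
    have h1 : ∫⁻ x', g x' ∂νt = piν Set.univ := Measure.lintegral_rnDeriv hac
    rw [lintegral_congr_ae hg0] at h1
    simp at h1
  -- the two-sided bound on Jmass at any admissible point
  have main : ∀ ω : Env H, ∀ x : Fin m₁ → E, Adm W ω x →
      ENNReal.ofReal (Wavg W ω x ^ 2 * (etp⁻¹ * (εm ^ m₂) ^ 2)) * L
          ≤ Jmass M W m₁ m₂ Mt ω x ∧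
      Jmass M W m₁ m₂ Mt ω x
          ≤ ENNReal.ofReal (Wavg W ω x ^ 2 * (etm⁻¹ * (εp ^ m₂) ^ 2)) * L := by
    intro ω x hadm
    haveI := hMtprob ω x
    have hS : 0 < ∑ j, W ω (x j) := hadm
    have hSne : ENNReal.ofReal (∑ j, W ω (x j)) ≠ 0 := (ENNReal.ofReal_pos.2 hS).ne'
    have hWa0 : 0 < Wavg W ω x := by
      have hm : (0:ℝ) < m₁ := by exact_mod_cast Nat.lt_of_lt_of_le Nat.zero_lt_one hm₁
      exact div_pos hS hm
    -- mixK bounds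
    have hmix : ∀ A : Set E, MeasurableSet A →
        ENNReal.ofReal εm * ν A ≤ mixK M W ω x A ∧
          mixK M W ω x A ≤ ENNReal.ofReal εp * ν A := by
      intro A hA
      have hval : mixK M W ω x A =
          (ENNReal.ofReal (∑ j, W ω (x j)))⁻¹ *
            ∑ j, ENNReal.ofReal (W ω (x j)) * M ω (x j) A := by
        simp [mixK, Measure.smul_apply, Measure.finset_sum_apply, smul_eq_mul]
      have hsum : (∑ j, ENNReal.ofReal (W ω (x j))) = ENNReal.ofReal (∑ j, W ω (x j)) :=
        (ENNReal.ofReal_sum_of_nonneg fun j _ => hWnn ω (x j)).symm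
      constructor
      · rw [hval]
        have hlow : ENNReal.ofReal (∑ j, W ω (x j)) * (ENNReal.ofReal εm * ν A)
            ≤ ∑ j, ENNReal.ofReal (W ω (x j)) * M ω (x j) A := by
          rw [← hsum, Finset.sum_mul]
          exact Finset.sum_le_sum fun j _ => mul_le_mul_right (hB2b ω (x j) A hA).1 _
        calc ENNReal.ofReal εm * ν A
            = (ENNReal.ofReal (∑ j, W ω (x j)))⁻¹ *
              (ENNReal.ofReal (∑ j, W ω (x j)) * (ENNReal.ofReal εm * ν A)) := by
              rw [← mul_assoc, ENNReal.inv_mul_cancel hSne ENNReal.ofReal_ne_top, one_mul]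
          _ ≤ _ := mul_le_mul_right hlow _
      · rw [hval]
        have hup : (∑ j, ENNReal.ofReal (W ω (x j)) * M ω (x j) A)
            ≤ ENNReal.ofReal (∑ j, W ω (x j)) * (ENNReal.ofReal εp * ν A) := by
          rw [← hsum, Finset.sum_mul]
          exact Finset.sum_le_sum fun j _ => mul_le_mul_right (hB2b ω (x j) A hA).2 _
        calc (ENNReal.ofReal (∑ j, W ω (x j)))⁻¹ *
              ∑ j, ENNReal.ofReal (W ω (x j)) * M ω (x j) A
            ≤ (ENNReal.ofReal (∑ j, W ω (x j)))⁻¹ *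
              (ENNReal.ofReal (∑ j, W ω (x j)) * (ENNReal.ofReal εp * ν A)) :=
              mul_le_mul_right hup _
          _ = ENNReal.ofReal εp * ν A := by
              rw [← mul_assoc, ENNReal.inv_mul_cancel hSne ENNReal.ofReal_ne_top, one_mul]
    have hmixle : mixK M W ω x ≤ ENNReal.ofReal εp • ν :=
      Measure.le_iff.2 fun A hA => by
        rw [Measure.smul_apply, smul_eq_mul]; exact (hmix A hA).2
    have hmixge : ENNReal.ofReal εm • ν ≤ mixK M W ω x :=
      Measure.le_iff.2 fun A hA => by
        rw [Measure.smul_apply, smul_eq_mul]; exact (hmix A hA).1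
    -- Mpart bounds
    have hMple : Mpart M W m₂ ω x ≤ (ENNReal.ofReal εp) ^ m₂ • piν := by
      have h1 : Measure.pi (fun _ : Fin m₂ => mixK M W ω x)
          ≤ Measure.pi fun _ : Fin m₂ => ENNReal.ofReal εp • ν :=
        auxJ_pi_le_pi fun _ => hmixle
      rwa [auxJ_pi_smul _ ENNReal.ofReal_ne_top] at h1
    have hMpge : (ENNReal.ofReal εm) ^ m₂ • piν ≤ Mpart M W m₂ ω x := by
      have h1 : Measure.pi (fun _ : Fin m₂ => ENNReal.ofReal εm • ν)
          ≤ Measure.pi fun _ : Fin m₂ => mixK M W ω x :=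
        auxJ_pi_le_pi fun _ => hmixge
      rwa [auxJ_pi_smul _ ENNReal.ofReal_ne_top] at h1
    haveI : IsFiniteMeasure (Mpart M W m₂ ω x) := by
      refine ⟨lt_of_le_of_lt (Measure.le_iff'.1 hMple Set.univ) ?_⟩
      rw [Measure.smul_apply, smul_eq_mul]
      exact ENNReal.mul_lt_top (ENNReal.pow_lt_top ENNReal.ofReal_lt_top)
        (measure_lt_top _ _)
    -- absolute continuity
    have hMt_ac : Mt ω x ≪ νt := by
      refine Measure.absolutelyContinuous_of_le_smul (μ' := Mt ω x)
        (c := ENNReal.ofReal etp) (Measure.le_iff.2 fun D hD => ?_)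
      rw [Measure.smul_apply, smul_eq_mul]
      exact (hMtbd ω x hadm D hD).2
    have hνt_ac : νt ≪ Mt ω x := by
      refine Measure.AbsolutelyContinuous.mk fun D hD hD0 => ?_
      have h1 := (hMtbd ω x hadm D hD).1
      rw [hD0] at h1
      have h2 : ENNReal.ofReal etm * νt D = 0 := le_antisymm h1 (by positivity)
      rcases mul_eq_zero.1 h2 with h | h
      · exact absurd h (ENNReal.ofReal_pos.2 hetm).ne'
      · exact h
    have hMp_νt : Mpart M W m₂ ω x ≪ νt :=
      (Measure.absolutelyContinuous_of_le_smul hMple).trans hac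
    have hMp_Mt : Mpart M W m₂ ω x ≪ Mt ω x := hMp_νt.trans hνt_ac
    -- densities
    set φ : (Fin m₂ → E) → ℝ≥0∞ := (Mpart M W m₂ ω x).rnDeriv (Mt ω x) with hφ
    set ψ : (Fin m₂ → E) → ℝ≥0∞ := (Mpart M W m₂ ω x).rnDeriv νt with hψ
    set t : (Fin m₂ → E) → ℝ≥0∞ := (Mt ω x).rnDeriv νt with ht
    have hchain : (fun y => φ y * t y) =ᵐ[νt] ψ :=
      Measure.rnDeriv_mul_rnDeriv hMp_Mt
    haveI : IsFiniteMeasure ((ENNReal.ofReal εp) ^ m₂ • piν) :=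
      auxJ_isFiniteMeasure_smul _ (ENNReal.pow_ne_top ENNReal.ofReal_ne_top) _
    haveI : IsFiniteMeasure ((ENNReal.ofReal εm) ^ m₂ • piν) :=
      auxJ_isFiniteMeasure_smul _ (ENNReal.pow_ne_top ENNReal.ofReal_ne_top) _
    haveI : IsFiniteMeasure (ENNReal.ofReal etm • νt) :=
      auxJ_isFiniteMeasure_smul _ ENNReal.ofReal_ne_top _
    haveI : IsFiniteMeasure (ENNReal.ofReal etp • νt) :=
      auxJ_isFiniteMeasure_smul _ ENNReal.ofReal_ne_top _
    have hsmul_ac : ∀ c : ℝ≥0∞, (c • piν) ≪ νt :=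
      fun c => (Measure.smul_absolutelyContinuous).trans hac
    have hψub : ψ ≤ᵐ[νt] fun y => (ENNReal.ofReal εp) ^ m₂ * g y := by
      have h1 := auxJ_rnDeriv_mono hMple hMp_νt (hsmul_ac _)
      have h2 := Measure.rnDeriv_smul_left_of_ne_top piν νt
        (r := (ENNReal.ofReal εp) ^ m₂) (ENNReal.pow_ne_top ENNReal.ofReal_ne_top)
      filter_upwards [h1, h2] with y hy1 hy2
      rw [hy2] at hy1
      simpa [smul_eq_mul] using hy1
    have hψlb : (fun y => (ENNReal.ofReal εm) ^ m₂ * g y) ≤ᵐ[νt] ψ := by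
      have h1 := auxJ_rnDeriv_mono hMpge (hsmul_ac _) hMp_νt
      have h2 := Measure.rnDeriv_smul_left_of_ne_top piν νt
        (r := (ENNReal.ofReal εm) ^ m₂) (ENNReal.pow_ne_top ENNReal.ofReal_ne_top)
      filter_upwards [h1, h2] with y hy1 hy2
      rw [hy2] at hy1
      simpa [smul_eq_mul] using hy1
    have hMtle : Mt ω x ≤ ENNReal.ofReal etp • νt :=
      Measure.le_iff.2 fun D hD => by
        rw [Measure.smul_apply, smul_eq_mul]; exact (hMtbd ω x hadm D hD).2
    have hMtge : ENNReal.ofReal etm • νt ≤ Mt ω x :=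
      Measure.le_iff.2 fun D hD => by
        rw [Measure.smul_apply, smul_eq_mul]; exact (hMtbd ω x hadm D hD).1
    have hsmul_νt_ac : ∀ c : ℝ≥0∞, (c • νt) ≪ νt := fun c =>
      Measure.smul_absolutelyContinuous
    have htub : t ≤ᵐ[νt] fun _ => ENNReal.ofReal etp := by
      have h1 := auxJ_rnDeriv_mono hMtle hMt_ac (hsmul_νt_ac _)
      have h2 := Measure.rnDeriv_smul_left_of_ne_top νt νt
        (r := ENNReal.ofReal etp) ENNReal.ofReal_ne_top
      have h3 := Measure.rnDeriv_self νt
      filter_upwards [h1, h2, h3] with y hy1 hy2 hy3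
      rw [hy2] at hy1
      simpa [smul_eq_mul, hy3] using hy1
    have htlb : (fun _ => ENNReal.ofReal etm) ≤ᵐ[νt] t := by
      have h1 := auxJ_rnDeriv_mono hMtge (hsmul_νt_ac _) hMt_ac
      have h2 := Measure.rnDeriv_smul_left_of_ne_top νt νt
        (r := ENNReal.ofReal etm) ENNReal.ofReal_ne_top
      have h3 := Measure.rnDeriv_self νt
      filter_upwards [h1, h2, h3] with y hy1 hy2 hy3
      rw [hy2] at hy1
      simpa [smul_eq_mul, hy3] using hy1
    -- rewrite the integral of φ² over Mt as integral over νt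
    have hφmeas : Measurable φ := Measure.measurable_rnDeriv _ _
    have htmeas : Measurable t := Measure.measurable_rnDeriv _ _
    have hψmeas : Measurable ψ := Measure.measurable_rnDeriv _ _
    have hMt_repr : νt.withDensity t = Mt ω x :=
      Measure.withDensity_rnDeriv_eq _ _ hMt_ac
    have hIrw : ∫⁻ y, φ y ^ 2 ∂(Mt ω x) = ∫⁻ y, t y * φ y ^ 2 ∂νt := by
      rw [← hMt_repr, lintegral_withDensity_eq_lintegral_mul _ htmeas (hφmeas.pow_const 2)]
      rfl
    -- pointwise a.e. two-sided bound of the integrand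
    have hetm0 : ENNReal.ofReal etm ≠ 0 := (ENNReal.ofReal_pos.2 hetm).ne'
    have hetp0 : ENNReal.ofReal etp ≠ 0 :=
      (ENNReal.ofReal_pos.2 (lt_of_lt_of_le hetm hetmp)).ne'
    have hub : ∀ᵐ y ∂νt, t y * φ y ^ 2
        ≤ (ENNReal.ofReal etm)⁻¹ * ((ENNReal.ofReal εp) ^ m₂) ^ 2 * g y ^ 2 := by
      filter_upwards [hchain, hψub, htlb] with y h1 h2 h3
      have hkey : t y * φ y ^ 2 = φ y * ψ y := by
        rw [← h1]; ring
      have h4 : ENNReal.ofReal etm * φ y ≤ ψ y := by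
        rw [← h1]; rw [mul_comm (φ y) (t y)]; exact mul_le_mul_left h3 _
      have h5 : φ y ≤ (ENNReal.ofReal etm)⁻¹ * ψ y := by
        calc φ y = (ENNReal.ofReal etm)⁻¹ * (ENNReal.ofReal etm * φ y) := by
              rw [← mul_assoc, ENNReal.inv_mul_cancel hetm0 ENNReal.ofReal_ne_top, one_mul]
          _ ≤ (ENNReal.ofReal etm)⁻¹ * ψ y := mul_le_mul_right h4 _
      calc t y * φ y ^ 2 = φ y * ψ y := hkey
        _ ≤ ((ENNReal.ofReal etm)⁻¹ * ψ y) * ψ y := mul_le_mul_left h5 _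
        _ ≤ ((ENNReal.ofReal etm)⁻¹ * ((ENNReal.ofReal εp) ^ m₂ * g y)) *
              ((ENNReal.ofReal εp) ^ m₂ * g y) := by
            exact mul_le_mul' (mul_le_mul_right h2 _) h2
        _ = (ENNReal.ofReal etm)⁻¹ * ((ENNReal.ofReal εp) ^ m₂) ^ 2 * g y ^ 2 := by ring
    have hlb : ∀ᵐ y ∂νt, (ENNReal.ofReal etp)⁻¹ * ((ENNReal.ofReal εm) ^ m₂) ^ 2 * g y ^ 2
        ≤ t y * φ y ^ 2 := by
      filter_upwards [hchain, hψlb, htub] with y h1 h2 h3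
      have hkey : t y * φ y ^ 2 = φ y * ψ y := by
        rw [← h1]; ring
      have h4 : ψ y ≤ ENNReal.ofReal etp * φ y := by
        rw [← h1]; rw [mul_comm (φ y) (t y)]; exact mul_le_mul_left h3 _
      have h5 : (ENNReal.ofReal etp)⁻¹ * ψ y ≤ φ y := by
        calc (ENNReal.ofReal etp)⁻¹ * ψ y
            ≤ (ENNReal.ofReal etp)⁻¹ * (ENNReal.ofReal etp * φ y) := mul_le_mul_right h4 _
          _ = φ y := by
              rw [← mul_assoc, ENNReal.inv_mul_cancel hetp0 ENNReal.ofReal_ne_top, one_mul]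
      calc (ENNReal.ofReal etp)⁻¹ * ((ENNReal.ofReal εm) ^ m₂) ^ 2 * g y ^ 2
          = ((ENNReal.ofReal etp)⁻¹ * ((ENNReal.ofReal εm) ^ m₂ * g y)) *
              ((ENNReal.ofReal εm) ^ m₂ * g y) := by ring
        _ ≤ ((ENNReal.ofReal etp)⁻¹ * ψ y) * ψ y := mul_le_mul' (mul_le_mul_right h2 _) h2
        _ ≤ φ y * ψ y := mul_le_mul_left h5 _
        _ = t y * φ y ^ 2 := hkey.symm
    -- integral bounds
    have hIub : ∫⁻ y, φ y ^ 2 ∂(Mt ω x)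
        ≤ (ENNReal.ofReal etm)⁻¹ * ((ENNReal.ofReal εp) ^ m₂) ^ 2 * L := by
      rw [hIrw, hLdef, ← lintegral_const_mul _ (hgmeas.pow_const 2)]
      exact lintegral_mono_ae hub
    have hIlb : (ENNReal.ofReal etp)⁻¹ * ((ENNReal.ofReal εm) ^ m₂) ^ 2 * L
        ≤ ∫⁻ y, φ y ^ 2 ∂(Mt ω x) := by
      rw [hIrw, hLdef, ← lintegral_const_mul _ (hgmeas.pow_const 2)]
      exact lintegral_mono_ae hlb
    -- J formula
    have hJ : Jmass M W m₁ m₂ Mt ω x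
        = (ENNReal.ofReal (Wavg W ω x)) ^ 2 * ∫⁻ y, φ y ^ 2 ∂(Mt ω x) := by
      rw [Jmass, Rker, withDensity_apply _ MeasurableSet.univ, Measure.restrict_univ]
      rw [lintegral_const_mul _ (hφmeas.pow_const 2)]
    -- conversion of constants
    have hcub : (ENNReal.ofReal (Wavg W ω x)) ^ 2 *
        ((ENNReal.ofReal etm)⁻¹ * ((ENNReal.ofReal εp) ^ m₂) ^ 2)
        = ENNReal.ofReal (Wavg W ω x ^ 2 * (etm⁻¹ * (εp ^ m₂) ^ 2)) := by
      rw [ENNReal.ofReal_mul (sq_nonneg (Wavg W ω x)),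
        ENNReal.ofReal_mul (inv_nonneg.2 hetm.le),
        ENNReal.ofReal_pow hWa0.le, ENNReal.ofReal_pow (pow_nonneg hεp.le m₂),
        ENNReal.ofReal_pow hεp.le, ENNReal.ofReal_inv_of_pos hetm]
    have hclb : (ENNReal.ofReal (Wavg W ω x)) ^ 2 *
        ((ENNReal.ofReal etp)⁻¹ * ((ENNReal.ofReal εm) ^ m₂) ^ 2)
        = ENNReal.ofReal (Wavg W ω x ^ 2 * (etp⁻¹ * (εm ^ m₂) ^ 2)) := by
      rw [ENNReal.ofReal_mul (sq_nonneg (Wavg W ω x)),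
        ENNReal.ofReal_mul (inv_nonneg.2 hetp.le),
        ENNReal.ofReal_pow hWa0.le, ENNReal.ofReal_pow (pow_nonneg hεm.le m₂),
        ENNReal.ofReal_pow hεm.le, ENNReal.ofReal_inv_of_pos hetp]
    constructor
    · rw [hJ, ← hclb]
      calc (ENNReal.ofReal (Wavg W ω x)) ^ 2 *
            ((ENNReal.ofReal etp)⁻¹ * ((ENNReal.ofReal εm) ^ m₂) ^ 2) * L
          = (ENNReal.ofReal (Wavg W ω x)) ^ 2 *
            ((ENNReal.ofReal etp)⁻¹ * ((ENNReal.ofReal εm) ^ m₂) ^ 2 * L) := by ring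
        _ ≤ (ENNReal.ofReal (Wavg W ω x)) ^ 2 * ∫⁻ y, φ y ^ 2 ∂(Mt ω x) :=
            mul_le_mul_right hIlb _
    · rw [hJ, ← hcub]
      calc (ENNReal.ofReal (Wavg W ω x)) ^ 2 * ∫⁻ y, φ y ^ 2 ∂(Mt ω x)
          ≤ (ENNReal.ofReal (Wavg W ω x)) ^ 2 *
            ((ENNReal.ofReal etm)⁻¹ * ((ENNReal.ofReal εp) ^ m₂) ^ 2 * L) :=
            mul_le_mul_right hIub _
        _ = (ENNReal.ofReal (Wavg W ω x)) ^ 2 *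
            ((ENNReal.ofReal etm)⁻¹ * ((ENNReal.ofReal εp) ^ m₂) ^ 2) * L := by ring
  -- assembly
  intro ω ω' x x' hadm hadm'
  have hWa0 : 0 < Wavg W ω x := by
    have hm : (0:ℝ) < m₁ := by exact_mod_cast Nat.lt_of_lt_of_le Nat.zero_lt_one hm₁
    exact div_pos hadm hm
  have hWb0 : 0 < Wavg W ω' x' := by
    have hm : (0:ℝ) < m₁ := by exact_mod_cast Nat.lt_of_lt_of_le Nat.zero_lt_one hm₁
    exact div_pos hadm' hm
  have hΔ1 : (1:ℝ) ≤ Δ3 := by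
    have h := hWr ω' ω' x' x' hadm' hadm'
    rwa [div_self hWb0.ne'] at h
  have hWab : Wavg W ω x ≤ Δ3 * Wavg W ω' x' := by
    have h := hWr ω ω' x x' hadm hadm'
    exact (div_le_iff₀ hWb0).1 h
  obtain ⟨hx_lb, hx_ub⟩ := main ω x hadm
  obtain ⟨hy_lb, hy_ub⟩ := main ω' x' hadm'
  have hetp : (0:ℝ) < etp := lt_of_lt_of_le hetm hetmp
  have hBpos : 0 < Wavg W ω' x' ^ 2 * (etp⁻¹ * (εm ^ m₂) ^ 2) :=
    mul_pos (pow_pos hWb0 2) (mul_pos (inv_pos.2 hetp) (pow_pos (pow_pos hεm m₂) 2))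
  have hJ'pos : 0 < Jmass M W m₁ m₂ Mt ω' x' :=
    lt_of_lt_of_le (ENNReal.mul_pos (ENNReal.ofReal_pos.2 hBpos).ne' hL0) hy_lb
  have hJ'top : Jmass M W m₁ m₂ Mt ω' x' ≠ ∞ :=
    ne_top_of_le_ne_top (ENNReal.mul_lt_top ENNReal.ofReal_lt_top hLtop.lt_top).ne hy_ub
  have hαnn : (0:ℝ) ≤ (Δ3 ^ 3 * (etp / etm) * (εp ^ m₂ / εm ^ m₂)) ^ 2 * (etp / etm) :=
    mul_nonneg (sq_nonneg _) (div_nonneg hetp.le hetm.le)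
  have hscalar := auxJ_scalar Δ3 εm εp etm etp (Wavg W ω x) (Wavg W ω' x') m₂
    hΔ1 hεm hεmp hetm hetmp hWb0 hWa0.le hWab
  rw [ENNReal.div_le_iff hJ'pos.ne' hJ'top]
  calc Jmass M W m₁ m₂ Mt ω x
      ≤ ENNReal.ofReal (Wavg W ω x ^ 2 * (etm⁻¹ * (εp ^ m₂) ^ 2)) * L := hx_ub
    _ ≤ ENNReal.ofReal (((Δ3 ^ 3 * (etp / etm) * (εp ^ m₂ / εm ^ m₂)) ^ 2 * (etp / etm)) *
          (Wavg W ω' x' ^ 2 * (etp⁻¹ * (εm ^ m₂) ^ 2))) * L :=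
        mul_le_mul_left (ENNReal.ofReal_le_ofReal hscalar) _
    _ = ENNReal.ofReal ((Δ3 ^ 3 * (etp / etm) * (εp ^ m₂ / εm ^ m₂)) ^ 2 * (etp / etm)) *
          (ENNReal.ofReal (Wavg W ω' x' ^ 2 * (etp⁻¹ * (εm ^ m₂) ^ 2)) * L) := by
        rw [ENNReal.ofReal_mul hαnn, mul_assoc]
    _ ≤ ENNReal.ofReal ((Δ3 ^ 3 * (etp / etm) * (εp ^ m₂ / εm ^ m₂)) ^ 2 * (etp / etm)) *
          Jmass M W m₁ m₂ Mt ω' x' := mul_le_mul_right hy_lb _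

end
end

section
/- Fix integers m₁, m₂ ≥ 1. Assume (B2); assume there is Δ3 ∈ (0,∞) with 𝐖^{m₁}(ω,x)/𝐖^{m₁}(ω',x') ≤ Δ3 for all admissible (ω,x),(ω',x'), and that 0 < w_- := inf 𝐖^{m₁} ≤ sup 𝐖^{m₁} =: w_+ < ∞ over admissible configurations. Let M̃ be any member of 𝕄^{m₁,m₂} with constants ε̃_-, ε̃_+ and reference measure ν̃, and let L(ω,x,·) = R(ω,x,·)/J(ω,x) be the normalized kernel. Define the probability measure σ on E^{m₂} by σ(dx') ∝ ((dν^{⊗m₂}/dν̃)(x'))²·ν̃(dx'). Then there exist constants 0 < δ_- ≤ δ_+ < ∞ such that δ_-·σ(A) ≤ L(ω,x,A) ≤ δ_+·σ(A) for every admissible (ω,x) ∈ Ω×E^{m₁} and every measurable A ⊆ E^{m₂}; explicitly one may take δ_- = w_-²·(ε_-^{m₂}/(Δ3·ε̃_+))²·ε̃_-·C / sup_{(ω,x)} J(ω,x) and δ_+ = w_+²·(Δ3·ε_+^{m₂}/ε̃_-)²·ε̃_+·C / inf_{(ω,x)} J(ω,x), where C = ∫(dν^{⊗m₂}/dν̃)²dν̃.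 -/
open MeasureTheory ENNReal Filter Topology

noncomputable section

variable {H E : Type*} [MeasurableSpace H] [MeasurableSpace E]

section AuxLemmas
variable {E : Type*} [MeasurableSpace E]



lemma my_pi_mono {n : ℕ} (μ ν : Fin n → Measure E) (h : ∀ i, μ i ≤ ν i) :
    Measure.pi μ ≤ Measure.pi ν := by
  have houter : (OuterMeasure.pi fun i => (μ i).toOuterMeasure)
      ≤ OuterMeasure.pi fun i => (ν i).toOuterMeasure := by
    rw [OuterMeasure.le_pi]
    intro s _
    refine (OuterMeasure.pi_pi_le _ s).trans ?_
    exact Finset.prod_le_prod' fun i _ => (h i) (s i)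
  refine Measure.le_intro fun s hs _ => ?_
  rw [Measure.pi_def, Measure.pi_def, toMeasure_apply _ _ hs, toMeasure_apply _ _ hs]
  exact houter s

lemma my_pi_smul {n : ℕ} (c : ℝ≥0∞) (hc : c ≠ ∞) (ν : Measure E) [IsProbabilityMeasure ν] :
    Measure.pi (fun _ : Fin n => c • ν) = c ^ n • Measure.pi (fun _ : Fin n => ν) := by
  haveI : IsFiniteMeasure (c • ν) := by
    constructor
    simp only [Measure.smul_apply, smul_eq_mul, measure_univ, mul_one]
    exact hc.lt_top
  haveI : SigmaFinite (c • ν) := inferInstance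
  refine Measure.pi_eq (μ := fun _ : Fin n => c • ν) fun s hs => ?_
  simp only [Measure.smul_apply, smul_eq_mul, Measure.pi_pi]
  rw [Finset.prod_mul_distrib, Finset.prod_const, Finset.card_univ, Fintype.card_fin]

lemma my_rnDeriv_le_of_le (μ ν : Measure E) [SigmaFinite ν] {g : E → ℝ≥0∞}
    (h : μ ≤ ν.withDensity g) : μ.rnDeriv ν ≤ᵐ[ν] g :=
  ae_le_of_forall_setLIntegral_le_of_sigmaFinite (Measure.measurable_rnDeriv μ ν)
    fun s hs _ => (Measure.setLIntegral_rnDeriv_le s).trans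
      (by rw [← withDensity_apply g hs]; exact Measure.le_iff'.mp h s)

lemma my_le_rnDeriv_of_le (μ ν : Measure E) [IsFiniteMeasure μ] [SigmaFinite ν]
    (hac : μ ≪ ν) {g : E → ℝ≥0∞} (hg : Measurable g) (h : ν.withDensity g ≤ μ) :
    g ≤ᵐ[ν] μ.rnDeriv ν :=
  ae_le_of_forall_setLIntegral_le_of_sigmaFinite hg fun s hs _ => by
    rw [← withDensity_apply g hs, Measure.setLIntegral_rnDeriv hac s]
    exact Measure.le_iff'.mp h s

end AuxLemmas

section AuxMix
variable {H E : Type*} [MeasurableSpace H] [MeasurableSpace E]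

lemma mixK_sandwich (M : Env H → E → Measure E) (W : Env H → E → ℝ)
    (hWnn : ∀ ω x, 0 ≤ W ω x) {m : ℕ}
    (εm εp : ℝ) (ν : Measure E)
    (hB2b : ∀ ω x, ∀ A : Set E, MeasurableSet A →
        ENNReal.ofReal εm * ν A ≤ M ω x A ∧ M ω x A ≤ ENNReal.ofReal εp * ν A)
    (ω : Env H) (x : Fin m → E) (hx : Adm W ω x) :
    ENNReal.ofReal εm • ν ≤ mixK M W ω x ∧ mixK M W ω x ≤ ENNReal.ofReal εp • ν := by
  have hS : ENNReal.ofReal (∑ j, W ω (x j)) ≠ 0 := by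
    simp only [ne_eq, ENNReal.ofReal_eq_zero, not_le]
    exact hx
  have hS' : ENNReal.ofReal (∑ j, W ω (x j)) ≠ ∞ := ofReal_ne_top
  have key : ∀ A : Set E, MeasurableSet A →
      mixK M W ω x A = (ENNReal.ofReal (∑ j, W ω (x j)))⁻¹ *
        ∑ j, ENNReal.ofReal (W ω (x j)) * M ω (x j) A := by
    intro A hA
    simp [mixK, Measure.smul_apply, Measure.finset_sum_apply, smul_eq_mul]
  have hsum : (∑ j, ENNReal.ofReal (W ω (x j))) = ENNReal.ofReal (∑ j, W ω (x j)) :=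
    (ENNReal.ofReal_sum_of_nonneg fun j _ => hWnn ω (x j)).symm
  constructor
  · refine Measure.le_intro fun A hA _ => ?_
    rw [key A hA]
    have hb : ENNReal.ofReal (∑ j, W ω (x j)) * (ENNReal.ofReal εm * ν A)
        ≤ ∑ j, ENNReal.ofReal (W ω (x j)) * M ω (x j) A := by
      rw [← hsum, Finset.sum_mul]
      exact Finset.sum_le_sum fun j _ => by
        rw [mul_comm, mul_comm (ENNReal.ofReal (W ω (x j)))]
        exact mul_le_mul_of_nonneg_right ((hB2b ω (x j) A hA).1) zero_le
    calc (ENNReal.ofReal εm • ν) A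
        = (ENNReal.ofReal (∑ j, W ω (x j)))⁻¹ *
          (ENNReal.ofReal (∑ j, W ω (x j)) * (ENNReal.ofReal εm * ν A)) := by
          rw [← mul_assoc, ENNReal.inv_mul_cancel hS hS', one_mul]; rfl
      _ ≤ _ := mul_le_mul_of_nonneg_left hb zero_le
  · refine Measure.le_intro fun A hA _ => ?_
    rw [key A hA]
    have hb : (∑ j, ENNReal.ofReal (W ω (x j)) * M ω (x j) A)
        ≤ ENNReal.ofReal (∑ j, W ω (x j)) * (ENNReal.ofReal εp * ν A) := by
      rw [← hsum, Finset.sum_mul]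
      exact Finset.sum_le_sum fun j _ => by
        rw [mul_comm, mul_comm (ENNReal.ofReal (W ω (x j)))]
        exact mul_le_mul_of_nonneg_right ((hB2b ω (x j) A hA).2) zero_le
    calc (ENNReal.ofReal (∑ j, W ω (x j)))⁻¹ *
          ∑ j, ENNReal.ofReal (W ω (x j)) * M ω (x j) A
        ≤ (ENNReal.ofReal (∑ j, W ω (x j)))⁻¹ *
          (ENNReal.ofReal (∑ j, W ω (x j)) * (ENNReal.ofReal εp * ν A)) :=
          mul_le_mul_of_nonneg_left hb zero_le
      _ = (ENNReal.ofReal εp • ν) A := by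
          rw [← mul_assoc, ENNReal.inv_mul_cancel hS hS', one_mul]; rfl

end AuxMix

/-- **Lemma 2 (L-kernel sandwich).** Fix `m₁, m₂ ≥ 1`, assume (B2), a uniform bound
`Δ3` on ratios of average weights, and uniform bounds `0 < w₋ ≤ 𝐖 ≤ w₊ < ∞`. For
any member `M̃` of `𝕄^{m₁,m₂}` there exist `0 < δ₋ ≤ δ₊ < ∞` such that the
normalised kernel `L(ω,x,·) = R(ω,x,·)/J(ω,x)` satisfies
`δ₋·σ(A) ≤ L(ω,x,A) ≤ δ₊·σ(A)`, where `σ(dx') ∝ ((dν^{⊗m₂}/dν̃)(x'))²·ν̃(dx')`. -/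
theorem lemma2_L_sandwich
    (M : Env H → E → Measure E) (W : Env H → E → ℝ)
    (hMprob : ∀ ω x, IsProbabilityMeasure (M ω x))
    (hMmeas : Measurable fun p : Env H × E => M p.1 p.2)
    (hWmeas : Measurable fun p : Env H × E => W p.1 p.2)
    (hWnn : ∀ ω x, 0 ≤ W ω x)
    (m₁ m₂ : ℕ) (hm₁ : 1 ≤ m₁) (hm₂ : 1 ≤ m₂)
    -- (B2), minorisation/majorisation part
    (εm εp : ℝ) (hεm : 0 < εm) (hεmp : εm ≤ εp)
    (ν : Measure E) [IsProbabilityMeasure ν]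
    (hB2b : ∀ ω x, ∀ A : Set E, MeasurableSet A →
        ENNReal.ofReal εm * ν A ≤ M ω x A ∧ M ω x A ≤ ENNReal.ofReal εp * ν A)
    -- uniform bounds on average weights over admissible configurations
    (Δ3 : ℝ) (hΔ3 : 0 < Δ3)
    (hWr : ∀ ω ω' : Env H, ∀ x x' : Fin m₁ → E, Adm W ω x → Adm W ω' x' →
        Wavg W ω x / Wavg W ω' x' ≤ Δ3)
    (wm wp : ℝ) (hwm : 0 < wm) (hwmp : wm ≤ wp)
    (hWbd : ∀ ω : Env H, ∀ x : Fin m₁ → E, Adm W ω x →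
        wm ≤ Wavg W ω x ∧ Wavg W ω x ≤ wp)
    -- M̃: a member of the class 𝕄^{m₁,m₂}, with its constants and reference measure
    (Mt : Env H → (Fin m₁ → E) → Measure (Fin m₂ → E))
    (hMtmeas : ∀ ω, Measurable (Mt ω))
    (hMtprob : ∀ ω x, IsProbabilityMeasure (Mt ω x))
    (etm etp : ℝ) (hetm : 0 < etm) (hetmp : etm ≤ etp)
    (νt : Measure (Fin m₂ → E)) [IsProbabilityMeasure νt]
    (hMtbd : ∀ ω, ∀ x : Fin m₁ → E, Adm W ω x →
        ∀ D : Set (Fin m₂ → E), MeasurableSet D →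
          ENNReal.ofReal etm * νt D ≤ Mt ω x D ∧
          Mt ω x D ≤ ENNReal.ofReal etp * νt D)
    (hac : (Measure.pi fun _ : Fin m₂ => ν) ≪ νt)
    (hL2 : ∫⁻ x', ((Measure.pi fun _ : Fin m₂ => ν).rnDeriv νt x') ^ 2 ∂νt < ∞) :
    ∃ δm δp : ℝ, 0 < δm ∧ δm ≤ δp ∧
      ∀ ω : Env H, ∀ x : Fin m₁ → E, Adm W ω x →
        ∀ A : Set (Fin m₂ → E), MeasurableSet A →
          ENNReal.ofReal δm *
            (((∫⁻ x', ((Measure.pi fun _ : Fin m₂ => ν).rnDeriv νt x') ^ 2 ∂νt)⁻¹ •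
              νt.withDensity fun x' =>
                ((Measure.pi fun _ : Fin m₂ => ν).rnDeriv νt x') ^ 2) A)
            ≤ ((Jmass M W m₁ m₂ Mt ω x)⁻¹ • Rker M W m₁ m₂ Mt ω x) A ∧
          ((Jmass M W m₁ m₂ Mt ω x)⁻¹ • Rker M W m₁ m₂ Mt ω x) A
            ≤ ENNReal.ofReal δp *
              (((∫⁻ x', ((Measure.pi fun _ : Fin m₂ => ν).rnDeriv νt x') ^ 2 ∂νt)⁻¹ •
                νt.withDensity fun x' =>
                  ((Measure.pi fun _ : Fin m₂ => ν).rnDeriv νt x') ^ 2) A) := by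

  classical
  -- notation
  set Pi2 : Measure (Fin m₂ → E) := Measure.pi fun _ : Fin m₂ => ν with hPi2def
  set f : (Fin m₂ → E) → ℝ≥0∞ := Pi2.rnDeriv νt with hfdef
  have hfm : Measurable f := Measure.measurable_rnDeriv _ _
  have hPi2prob : IsProbabilityMeasure Pi2 := by rw [hPi2def]; infer_instance
  have hPi2f : νt.withDensity f = Pi2 := Measure.withDensity_rnDeriv_eq _ _ hac
  set C : ℝ≥0∞ := ∫⁻ x', f x' ^ 2 ∂νt with hCdef
  have hCtop : C ≠ ∞ := hL2.ne
  have hC0 : C ≠ 0 := by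
    intro h0
    have hsq : (fun x' => f x' ^ 2) =ᵐ[νt] 0 :=
      (lintegral_eq_zero_iff (hfm.pow_const 2)).mp h0
    have hf0 : f =ᵐ[νt] 0 := by
      filter_upwards [hsq] with y hy
      simpa [pow_eq_zero_iff] using hy
    have : Pi2 = 0 := by
      rw [← hPi2f, withDensity_congr_ae hf0, withDensity_zero]
    exact (one_ne_zero (α := ℝ≥0∞)) (by simpa [this] using hPi2prob.measure_univ.symm)
  -- constants
  have hεp : (0:ℝ) < εp := hεm.trans_le hεmp
  have hetp : (0:ℝ) < etp := hetm.trans_le hetmp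
  have hwp : (0:ℝ) < wp := hwm.trans_le hwmp
  set cm : ℝ≥0∞ := ENNReal.ofReal εm ^ m₂ with hcm
  set cp : ℝ≥0∞ := ENNReal.ofReal εp ^ m₂ with hcp
  set em' : ℝ≥0∞ := ENNReal.ofReal etm with hem
  set ep' : ℝ≥0∞ := ENNReal.ofReal etp with hep
  set wl : ℝ≥0∞ := ENNReal.ofReal wm with hwl
  set wu : ℝ≥0∞ := ENNReal.ofReal wp with hwu
  have hcm0 : cm ≠ 0 := pow_ne_zero _ (by simp [ENNReal.ofReal_eq_zero, not_le, hεm])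
  have hcp0 : cp ≠ 0 := pow_ne_zero _ (by simp [ENNReal.ofReal_eq_zero, not_le, hεp])
  have hcmtop : cm ≠ ∞ := (pow_ne_top ofReal_ne_top)
  have hcptop : cp ≠ ∞ := (pow_ne_top ofReal_ne_top)
  have hem0 : em' ≠ 0 := by simp [hem, ENNReal.ofReal_eq_zero, not_le, hetm]
  have hep0 : ep' ≠ 0 := by simp [hep, ENNReal.ofReal_eq_zero, not_le, hetp]
  have hemtop : em' ≠ ∞ := ofReal_ne_top
  have heptop : ep' ≠ ∞ := ofReal_ne_top
  have hwl0 : wl ≠ 0 := by simp [hwl, ENNReal.ofReal_eq_zero, not_le, hwm]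
  have hwu0 : wu ≠ 0 := by simp [hwu, ENNReal.ofReal_eq_zero, not_le, hwp]
  have hwltop : wl ≠ ∞ := ofReal_ne_top
  have hwutop : wu ≠ ∞ := ofReal_ne_top
  set kl : ℝ≥0∞ := wl ^ 2 * cm ^ 2 * ep'⁻¹ with hkl
  set ku : ℝ≥0∞ := wu ^ 2 * cp ^ 2 * em'⁻¹ with hku
  have hkl0 : kl ≠ 0 := by
    simp only [hkl, mul_ne_zero_iff]
    exact ⟨⟨pow_ne_zero _ hwl0, pow_ne_zero _ hcm0⟩, ENNReal.inv_ne_zero.mpr heptop⟩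
  have hku0 : ku ≠ 0 := by
    simp only [hku, mul_ne_zero_iff]
    exact ⟨⟨pow_ne_zero _ hwu0, pow_ne_zero _ hcp0⟩, ENNReal.inv_ne_zero.mpr hemtop⟩
  have hkltop : kl ≠ ∞ :=
    ENNReal.mul_ne_top (ENNReal.mul_ne_top (pow_ne_top hwltop) (pow_ne_top hcmtop))
      (ENNReal.inv_ne_top.mpr hep0)
  have hkutop : ku ≠ ∞ :=
    ENNReal.mul_ne_top (ENNReal.mul_ne_top (pow_ne_top hwutop) (pow_ne_top hcptop))
      (ENNReal.inv_ne_top.mpr hem0)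
  have hklku : kl ≤ ku := by
    refine mul_le_mul' (mul_le_mul' ?_ ?_) ?_
    · exact pow_le_pow_left' (ENNReal.ofReal_le_ofReal hwmp) 2
    · exact pow_le_pow_left' (pow_le_pow_left' (ENNReal.ofReal_le_ofReal hεmp) m₂) 2
    · exact ENNReal.inv_le_inv.mpr (ENNReal.ofReal_le_ofReal hetmp)
  refine ⟨(kl * ku⁻¹).toReal, (ku * kl⁻¹).toReal, ?_, ?_, ?_⟩
  · exact ENNReal.toReal_pos (mul_ne_zero hkl0 (ENNReal.inv_ne_zero.mpr hkutop))
      (ENNReal.mul_ne_top hkltop (ENNReal.inv_ne_top.mpr hku0))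
  · refine ENNReal.toReal_mono (ENNReal.mul_ne_top hkutop (ENNReal.inv_ne_top.mpr hkl0)) ?_
    exact mul_le_mul' hklku (ENNReal.inv_le_inv.mpr hklku)
  intro ω x hx A hA
  have hofδm : ENNReal.ofReal (kl * ku⁻¹).toReal = kl * ku⁻¹ :=
    ENNReal.ofReal_toReal (ENNReal.mul_ne_top hkltop (ENNReal.inv_ne_top.mpr hku0))
  have hofδp : ENNReal.ofReal (ku * kl⁻¹).toReal = ku * kl⁻¹ :=
    ENNReal.ofReal_toReal (ENNReal.mul_ne_top hkutop (ENNReal.inv_ne_top.mpr hkl0))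
  -- mixture sandwich and product sandwich
  obtain ⟨hml, hmu⟩ := mixK_sandwich M W hWnn εm εp ν hB2b ω x hx
  have hMPu : Mpart M W m₂ ω x ≤ cp • Pi2 := by
    calc Mpart M W m₂ ω x = Measure.pi fun _ : Fin m₂ => mixK M W ω x := rfl
      _ ≤ Measure.pi fun _ : Fin m₂ => ENNReal.ofReal εp • ν :=
          my_pi_mono _ _ fun _ => hmu
      _ = cp • Pi2 := my_pi_smul _ ofReal_ne_top ν
  have hMPl : cm • Pi2 ≤ Mpart M W m₂ ω x := by
    calc cm • Pi2 = Measure.pi fun _ : Fin m₂ => ENNReal.ofReal εm • ν :=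
          (my_pi_smul _ ofReal_ne_top ν).symm
      _ ≤ Measure.pi fun _ : Fin m₂ => mixK M W ω x := my_pi_mono _ _ fun _ => hml
      _ = Mpart M W m₂ ω x := rfl
  have hWDu : νt.withDensity (fun y => cp * f y) = cp • Pi2 := by
    rw [← hPi2f, ← withDensity_smul cp hfm]; rfl
  have hWDl : νt.withDensity (fun y => cm * f y) = cm • Pi2 := by
    rw [← hPi2f, ← withDensity_smul cm hfm]; rfl
  have hMP_ac : Mpart M W m₂ ω x ≪ νt := by
    refine (Measure.absolutelyContinuous_of_le ?_).trans
      (withDensity_absolutelyContinuous νt (fun y => cp * f y))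
    rw [hWDu]; exact hMPu
  haveI hMPfin : IsFiniteMeasure (Mpart M W m₂ ω x) := by
    constructor
    refine lt_of_le_of_lt (Measure.le_iff'.mp hMPu Set.univ) ?_
    simp only [Measure.smul_apply, smul_eq_mul, measure_univ, mul_one]
    exact hcptop.lt_top
  set G : (Fin m₂ → E) → ℝ≥0∞ := (Mpart M W m₂ ω x).rnDeriv νt with hGdef
  have hGm : Measurable G := Measure.measurable_rnDeriv _ _
  have hGu : G ≤ᵐ[νt] fun y => cp * f y :=
    my_rnDeriv_le_of_le _ _ (by rw [hWDu]; exact hMPu)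
  have hGl : (fun y => cm * f y) ≤ᵐ[νt] G :=
    my_le_rnDeriv_of_le _ _ hMP_ac (measurable_const.mul hfm) (by rw [hWDl]; exact hMPl)
  have hGd : νt.withDensity G = Mpart M W m₂ ω x :=
    Measure.withDensity_rnDeriv_eq _ _ hMP_ac
  -- Mt sandwich
  have hMtl : em' • νt ≤ Mt ω x :=
    Measure.le_intro fun s hs _ => by
      simpa [Measure.smul_apply, smul_eq_mul] using (hMtbd ω x hx s hs).1
  have hMtu : Mt ω x ≤ ep' • νt :=
    Measure.le_intro fun s hs _ => by
      simpa [Measure.smul_apply, smul_eq_mul] using (hMtbd ω x hx s hs).2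
  have hMt_ac : Mt ω x ≪ νt := by
    refine (Measure.absolutelyContinuous_of_le hMtu).trans ?_
    exact Measure.AbsolutelyContinuous.mk fun s hs h0 => by
      simp [Measure.smul_apply, h0]
  have hνt_acMt : νt ≪ Mt ω x := by
    refine Measure.AbsolutelyContinuous.mk fun s hs h0 => ?_
    have h1 := Measure.le_iff'.mp hMtl s
    rw [h0] at h1
    simp only [Measure.smul_apply, smul_eq_mul, nonpos_iff_eq_zero, mul_eq_zero] at h1
    exact h1.resolve_left hem0
  set ψ : (Fin m₂ → E) → ℝ≥0∞ := (Mt ω x).rnDeriv νt with hψdef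
  have hψm : Measurable ψ := Measure.measurable_rnDeriv _ _
  have hψu : ψ ≤ᵐ[νt] fun _ => ep' :=
    my_rnDeriv_le_of_le _ _ (by rw [withDensity_const]; exact hMtu)
  have hψl : (fun _ : Fin m₂ → E => em') ≤ᵐ[νt] ψ :=
    my_le_rnDeriv_of_le _ _ hMt_ac measurable_const (by rw [withDensity_const]; exact hMtl)
  have hψd : νt.withDensity ψ = Mt ω x := Measure.withDensity_rnDeriv_eq _ _ hMt_ac
  -- φ and the key identity
  set φ : (Fin m₂ → E) → ℝ≥0∞ := (Mpart M W m₂ ω x).rnDeriv (Mt ω x) with hφdef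
  have hφm : Measurable φ := Measure.measurable_rnDeriv _ _
  have hMP_acMt : Mpart M W m₂ ω x ≪ Mt ω x := hMP_ac.trans hνt_acMt
  have hφd : (Mt ω x).withDensity φ = Mpart M W m₂ ω x :=
    Measure.withDensity_rnDeriv_eq _ _ hMP_acMt
  have hkey : ∀ᵐ y ∂νt, ψ y * φ y = G y := by
    have h1 : νt.withDensity (fun y => ψ y * φ y) = νt.withDensity G := by
      show νt.withDensity (ψ * φ) = _
      rw [withDensity_mul νt hψm hφm, hψd, hφd, hGd]
    have h2 : (νt.withDensity fun y => ψ y * φ y).rnDeriv νt =ᵐ[νt] fun y => ψ y * φ y :=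
      Measure.rnDeriv_withDensity νt (hψm.mul hφm)
    rw [h1] at h2
    exact h2.symm.trans (Measure.rnDeriv_withDensity νt hGm)
  -- the density bound
  set wa : ℝ≥0∞ := ENNReal.ofReal (Wavg W ω x) with hwa
  have hwal : wl ≤ wa := ENNReal.ofReal_le_ofReal (hWbd ω x hx).1
  have hwau : wa ≤ wu := ENNReal.ofReal_le_ofReal (hWbd ω x hx).2
  have hDbound : ∀ᵐ y ∂νt,
      kl * f y ^ 2 ≤ ψ y * (wa ^ 2 * φ y ^ 2) ∧
      ψ y * (wa ^ 2 * φ y ^ 2) ≤ ku * f y ^ 2 := by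
    filter_upwards [hψu, hψl, hkey, hGu, hGl] with y h1 h2 h3 h4 h5
    have hcancel : ∀ a b : ℝ≥0∞, b ≠ 0 → b ≠ ∞ → a * b * b⁻¹ = a := by
      intro a b hb0 hbt
      rw [mul_assoc, ENNReal.mul_inv_cancel hb0 hbt, mul_one]
    constructor
    · -- lower bound
      have e1 : ψ y * φ y ^ 2 * ep' ≥ (cm * f y) ^ 2 := by
        calc (cm * f y) ^ 2 ≤ G y ^ 2 := pow_le_pow_left' h5 2
          _ = (ψ y * φ y) ^ 2 := by rw [h3]
          _ = ψ y * φ y ^ 2 * ψ y := by ring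
          _ ≤ ψ y * φ y ^ 2 * ep' := mul_le_mul_right h1 _
      have e2 : cm ^ 2 * f y ^ 2 * ep'⁻¹ ≤ ψ y * φ y ^ 2 := by
        calc cm ^ 2 * f y ^ 2 * ep'⁻¹ = (cm * f y) ^ 2 * ep'⁻¹ := by rw [mul_pow]
          _ ≤ ψ y * φ y ^ 2 * ep' * ep'⁻¹ := mul_le_mul_left e1 _
          _ = ψ y * φ y ^ 2 := hcancel _ _ hep0 heptop
      calc kl * f y ^ 2 = wl ^ 2 * (cm ^ 2 * f y ^ 2 * ep'⁻¹) := by rw [hkl]; ring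
        _ ≤ wa ^ 2 * (ψ y * φ y ^ 2) :=
            mul_le_mul' (pow_le_pow_left' hwal 2) e2
        _ = ψ y * (wa ^ 2 * φ y ^ 2) := by ring
    · -- upper bound
      have e1 : ψ y * φ y ^ 2 * em' ≤ (cp * f y) ^ 2 := by
        calc ψ y * φ y ^ 2 * em' ≤ ψ y * φ y ^ 2 * ψ y := mul_le_mul_right h2 _
          _ = (ψ y * φ y) ^ 2 := by ring
          _ = G y ^ 2 := by rw [h3]
          _ ≤ (cp * f y) ^ 2 := pow_le_pow_left' h4 2
      have e2 : ψ y * φ y ^ 2 ≤ cp ^ 2 * f y ^ 2 * em'⁻¹ := by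
        calc ψ y * φ y ^ 2 = ψ y * φ y ^ 2 * em' * em'⁻¹ := (hcancel _ _ hem0 hemtop).symm
          _ ≤ (cp * f y) ^ 2 * em'⁻¹ := mul_le_mul_left e1 _
          _ = cp ^ 2 * f y ^ 2 * em'⁻¹ := by rw [mul_pow]
      calc ψ y * (wa ^ 2 * φ y ^ 2) = wa ^ 2 * (ψ y * φ y ^ 2) := by ring
        _ ≤ wu ^ 2 * (cp ^ 2 * f y ^ 2 * em'⁻¹) :=
            mul_le_mul' (pow_le_pow_left' hwau 2) e2
        _ = ku * f y ^ 2 := by rw [hku]; ring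
  -- computation of R on measurable sets
  have hRA : ∀ B : Set (Fin m₂ → E), MeasurableSet B →
      Rker M W m₁ m₂ Mt ω x B = ∫⁻ y in B, ψ y * (wa ^ 2 * φ y ^ 2) ∂νt := by
    intro B hB
    rw [Rker, withDensity_apply _ hB]
    simp only [← hwa, ← hφdef]
    rw [← hψd, restrict_withDensity hB,
      lintegral_withDensity_eq_lintegral_mul _ hψm
        (by exact (measurable_const.mul (hφm.pow_const 2)) : Measurable fun y => wa ^ 2 * φ y ^ 2)]
    rfl
  have hRlow : ∀ B : Set (Fin m₂ → E), MeasurableSet B →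
      kl * ∫⁻ y in B, f y ^ 2 ∂νt ≤ Rker M W m₁ m₂ Mt ω x B := by
    intro B hB
    rw [hRA B hB, ← lintegral_const_mul kl (hfm.pow_const 2)]
    exact lintegral_mono_ae (ae_restrict_of_ae (hDbound.mono fun y hy => hy.1))
  have hRup : ∀ B : Set (Fin m₂ → E), MeasurableSet B →
      Rker M W m₁ m₂ Mt ω x B ≤ ku * ∫⁻ y in B, f y ^ 2 ∂νt := by
    intro B hB
    rw [hRA B hB, ← lintegral_const_mul ku (hfm.pow_const 2)]
    exact lintegral_mono_ae (ae_restrict_of_ae (hDbound.mono fun y hy => hy.2))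
  -- bounds on J
  set J : ℝ≥0∞ := Jmass M W m₁ m₂ Mt ω x with hJdef
  have hJlow : kl * C ≤ J := by
    have := hRlow Set.univ MeasurableSet.univ
    rwa [setLIntegral_univ, ← hCdef] at this
  have hJup : J ≤ ku * C := by
    have := hRup Set.univ MeasurableSet.univ
    rwa [setLIntegral_univ, ← hCdef] at this
  -- final computation
  have hσA : ((C⁻¹ • νt.withDensity fun x' => f x' ^ 2)) A = C⁻¹ * ∫⁻ y in A, f y ^ 2 ∂νt := by
    rw [Measure.smul_apply, withDensity_apply _ hA, smul_eq_mul]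
  have hLA : ((J⁻¹ • Rker M W m₁ m₂ Mt ω x)) A = J⁻¹ * Rker M W m₁ m₂ Mt ω x A := by
    rw [Measure.smul_apply, smul_eq_mul]
  rw [hσA, hLA]
  constructor
  · calc ENNReal.ofReal (kl * ku⁻¹).toReal * (C⁻¹ * ∫⁻ y in A, f y ^ 2 ∂νt)
        = (ku * C)⁻¹ * (kl * ∫⁻ y in A, f y ^ 2 ∂νt) := by
          rw [hofδm, ENNReal.mul_inv (Or.inl hku0) (Or.inl hkutop)]; ring
      _ ≤ J⁻¹ * Rker M W m₁ m₂ Mt ω x A :=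
          mul_le_mul' (ENNReal.inv_le_inv.mpr hJup) (hRlow A hA)
  · calc J⁻¹ * Rker M W m₁ m₂ Mt ω x A
        ≤ (kl * C)⁻¹ * (ku * ∫⁻ y in A, f y ^ 2 ∂νt) :=
          mul_le_mul' (ENNReal.inv_le_inv.mpr hJlow) (hRup A hA)
      _ = ENNReal.ofReal (ku * kl⁻¹).toReal * (C⁻¹ * ∫⁻ y in A, f y ^ 2 ∂νt) := by
          rw [hofδp, ENNReal.mul_inv (Or.inl hkl0) (Or.inl hkltop)]; ring


end
end
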